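/- arXiv:2605.11271 — 5 statements merged into one kernel-verified Lean document; each statement's English description precedes it below -/
import Mathlib

section
/- Let f, g : I → [0,∞) be continuous with g ≤ f. Then the Lorentzian length of any future-directed causal curve γ = (α,β) satisfies ∫ₐᵇ √((α')² − (f∘α)²(β')²) ≤ ∫ₐᵇ √((α')² − (g∘α)²(β')²), and hence the time separation functions satisfy τ_{−I×_f[0,L]}(p,q) ≤ τ_{−I×_g[0,L]}(p,q) for all causally related pairs (p,q). -/
open MeasureTheory Set
open Filter

/-- An admissible curve in `I × [0,L]`: both components Lipschitz, with values
in `I` and `[0,L]` respectively. -/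
def Admissible (I : Set ℝ) (L a b : ℝ) (α β : ℝ → ℝ) : Prop :=
  a < b ∧ (∃ K : NNReal, LipschitzOnWith K α (Icc a b)) ∧
    (∃ K : NNReal, LipschitzOnWith K β (Icc a b)) ∧
    MapsTo α (Icc a b) I ∧ MapsTo β (Icc a b) (Icc 0 L)

/-- A future-directed causal curve for the warped metric `−dt² + f²dr²`. -/
def FutureCausal (I : Set ℝ) (L : ℝ) (f : ℝ → ℝ) (a b : ℝ) (α β : ℝ → ℝ) : Prop :=
  Admissible I L a b α β ∧
    ∀ᵐ t ∂(volume.restrict (Icc a b)),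
      0 ≤ deriv α t ∧ (f (α t)) ^ 2 * (deriv β t) ^ 2 ≤ (deriv α t) ^ 2

/-- Lorentzian length of a curve in the warped product `−I ×_f [0,L]`. -/
noncomputable def LorLen (f : ℝ → ℝ) (a b : ℝ) (α β : ℝ → ℝ) : ℝ :=
  ∫ t in a..b, Real.sqrt ((deriv α t) ^ 2 - (f (α t)) ^ 2 * (deriv β t) ^ 2)

/-- Time separation function of `−I ×_f [0,L]`: the supremum of Lorentzian lengths of
future-directed causal curves joining `p` to `q` (and `0` if there is no such curve). -/
noncomputable def tauW (I : Set ℝ) (L : ℝ) (f : ℝ → ℝ) (p q : ℝ × ℝ) : ℝ :=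
  sSup (insert 0 {r | ∃ a b α β, FutureCausal I L f a b α β ∧
    (α a, β a) = p ∧ (α b, β b) = q ∧ r = LorLen f a b α β})

/- ### Auxiliary lemmas -/

lemma deriv_abs_le_of_lipschitzWith {K : NNReal} {A : ℝ → ℝ} (hA : LipschitzWith K A) (t : ℝ) :
    |deriv A t| ≤ K := by
  have h1 : ‖fderiv ℝ A t‖ ≤ (K : ℝ) := norm_fderiv_le_of_lipschitz ℝ hA
  have h2 : deriv A t = fderiv ℝ A t 1 := rfl
  calc |deriv A t| = ‖fderiv ℝ A t 1‖ := by rw [h2]; rfl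
    _ ≤ ‖fderiv ℝ A t‖ * ‖(1:ℝ)‖ := (fderiv ℝ A t).le_opNorm 1
    _ ≤ K := by simpa using h1

lemma deriv_eq_of_ioo {α A : ℝ → ℝ} {a b t : ℝ} (heq : EqOn α A (Icc a b)) (ht : t ∈ Ioo a b) :
    deriv α t = deriv A t := by
  have hnb : Icc a b ∈ nhds t := Icc_mem_nhds ht.1 ht.2
  have h : α =ᶠ[nhds t] A := by filter_upwards [hnb] with s hs using heq hs
  exact h.deriv_eq

/-- a.e. bound on `deriv α` for a function Lipschitz on `Icc a b`. -/
lemma ae_deriv_abs_le {K : NNReal} {α : ℝ → ℝ} {a b : ℝ}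
    (hα : LipschitzOnWith K α (Icc a b)) :
    ∀ᵐ t ∂(volume.restrict (Icc a b)), |deriv α t| ≤ K := by
  obtain ⟨A, hA, hAeq⟩ := hα.extend_real
  have h0 : (volume.restrict (Icc a b)) ({a, b} : Set ℝ) = 0 := by
    refine le_antisymm (le_trans (Measure.restrict_apply_le _ _) ?_) zero_le
    exact le_of_eq (((Set.finite_singleton b).insert a).measure_zero _)
  filter_upwards [ae_restrict_mem measurableSet_Icc, compl_mem_ae_iff.mpr h0] with t ht htc
  have htIoo : t ∈ Ioo a b := by
    simp only [mem_compl_iff, mem_insert_iff, mem_singleton_iff, not_or] at htc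
    exact ⟨lt_of_le_of_ne ht.1 (Ne.symm htc.1), lt_of_le_of_ne ht.2 htc.2⟩
  rw [deriv_eq_of_ioo hAeq htIoo]
  exact deriv_abs_le_of_lipschitzWith hA t

/-- FTC-type inequality for globally Lipschitz functions. -/
lemma lip_integral_deriv_le {K : NNReal} {A : ℝ → ℝ} (hA : LipschitzWith K A)
    {a b : ℝ} (hab : a ≤ b) :
    ∫ t in a..b, deriv A t ≤ A b - A a := by
  set c : ℕ → ℝ := fun n => 1 / (n + 1) with hcdef
  have hcpos : ∀ n, 0 < c n := fun n => Nat.one_div_pos_of_nat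
  have hc0 : Tendsto c atTop (nhds 0) := tendsto_one_div_add_atTop_nhds_zero_nat
  set q : ℕ → ℝ → ℝ := fun n t => (A (t + c n) - A t) / c n with hq
  have hAc : Continuous A := hA.continuous
  -- pointwise convergence a.e.
  have hconv : ∀ᵐ t ∂(volume : Measure ℝ),
      Tendsto (fun n => q n t) atTop (nhds (deriv A t)) := by
    filter_upwards [hA.ae_differentiableAt] with t ht
    have hd : HasDerivAt A (deriv A t) t := ht.hasDerivAt
    rw [hasDerivAt_iff_tendsto_slope] at hd
    have hseq : Tendsto (fun n => t + c n) atTop (nhdsWithin t {t}ᶜ) := by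
      rw [tendsto_nhdsWithin_iff]
      constructor
      · simpa using tendsto_const_nhds.add hc0
      · exact Eventually.of_forall fun n => by
          simp only [mem_compl_iff, mem_singleton_iff]
          have := (hcpos n).ne'
          intro h; exact this (by linarith)
    have := hd.comp hseq
    convert this using 2 with n
    simp [q, slope, div_eq_inv_mul]
  -- uniform bound
  have hbd : ∀ n t, |q n t| ≤ (K : ℝ) := by
    intro n t
    have h1 : |A (t + c n) - A t| ≤ K * |t + c n - t| := by
      simpa [Real.dist_eq] using hA.dist_le_mul (t + c n) t
    rw [hq]
    simp only
    rw [abs_div]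
    rw [div_le_iff₀ (by simpa [abs_of_pos (hcpos n)] using hcpos n : (0:ℝ) < |c n|)]
    calc |A (t + c n) - A t| ≤ K * |t + c n - t| := h1
      _ = K * |c n| := by ring_nf
  -- integral bound for the difference quotients
  have key : ∀ n, ∫ t in a..b, q n t ≤ A b - A a + 2 * K * c n := by
    intro n
    have hint : ∀ u v : ℝ, IntervalIntegrable A volume u v := fun u v =>
      hAc.intervalIntegrable u v
    have e1 : ∫ t in a..b, q n t
        = ((∫ t in (a + c n)..(b + c n), A t) - ∫ t in a..b, A t) / c n := by
      rw [hq]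
      simp only
      rw [intervalIntegral.integral_div]
      congr 1
      have hsub := intervalIntegral.integral_sub (μ := volume) (a := a) (b := b)
        (f := fun t => A (t + c n)) (g := A)
        ((hAc.comp (continuous_id.add continuous_const)).intervalIntegrable _ _)
        (hAc.intervalIntegrable _ _)
      rw [hsub]
      congr 1
      exact intervalIntegral.integral_comp_add_right A (c n)
    have h1 : (∫ t in a..(a + c n), A t) + (∫ t in (a + c n)..(b + c n), A t)
        = ∫ t in a..(b + c n), A t :=
      intervalIntegral.integral_add_adjacent_intervals (hint _ _) (hint _ _)
    have h2 : (∫ t in a..b, A t) + (∫ t in b..(b + c n), A t)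
        = ∫ t in a..(b + c n), A t :=
      intervalIntegral.integral_add_adjacent_intervals (hint _ _) (hint _ _)
    have hb1 : ∫ t in b..(b + c n), A t ≤ (A b + K * c n) * c n := by
      have hmono : ∀ t ∈ Icc b (b + c n), A t ≤ A b + K * c n := by
        intro t ht
        have := hA.dist_le_mul t b
        rw [Real.dist_eq, Real.dist_eq] at this
        have h3 : |A t - A b| ≤ K * |t - b| := this
        have h4 : |t - b| ≤ c n := by
          rw [abs_le]; constructor <;> [linarith [ht.1, (hcpos n).le]; linarith [ht.2]]
        have h5 : A t - A b ≤ |A t - A b| := le_abs_self _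
        nlinarith [K.coe_nonneg]
      calc ∫ t in b..(b + c n), A t ≤ ∫ _t in b..(b + c n), (A b + (K:ℝ) * c n) :=
            intervalIntegral.integral_mono_on (by linarith [hcpos n]) (hint _ _)
              (intervalIntegrable_const) hmono
        _ = (A b + K * c n) * c n := by
            rw [intervalIntegral.integral_const]; simp; ring
    have hb2 : (A a - K * c n) * c n ≤ ∫ t in a..(a + c n), A t := by
      have hmono : ∀ t ∈ Icc a (a + c n), A a - (K:ℝ) * c n ≤ A t := by
        intro t ht
        have := hA.dist_le_mul t a
        rw [Real.dist_eq, Real.dist_eq] at this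
        have h3 : |A t - A a| ≤ K * |t - a| := this
        have h4 : |t - a| ≤ c n := by
          rw [abs_le]; constructor <;> [linarith [ht.1, (hcpos n).le]; linarith [ht.2]]
        have h5 : -(A t - A a) ≤ |A t - A a| := neg_le_abs _
        nlinarith [K.coe_nonneg]
      calc (A a - K * c n) * c n = ∫ _t in a..(a + c n), (A a - (K:ℝ) * c n) := by
            rw [intervalIntegral.integral_const]; simp; ring
        _ ≤ ∫ t in a..(a + c n), A t :=
            intervalIntegral.integral_mono_on (by linarith [hcpos n])
              (intervalIntegrable_const) (hint _ _) hmono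
    rw [e1]
    rw [div_le_iff₀ (hcpos n)]
    nlinarith [hcpos n]
  -- dominated convergence
  have hqc : ∀ n, Continuous (q n) := by
    intro n; rw [hq]
    exact ((hAc.comp (continuous_id.add continuous_const)).sub hAc).div_const _
  have hDCT : Tendsto (fun n => ∫ t in Ioc a b, q n t) atTop
      (nhds (∫ t in Ioc a b, deriv A t)) := by
    refine tendsto_integral_of_dominated_convergence (fun _ => (K : ℝ))
      (fun n => (hqc n).aestronglyMeasurable) (integrable_const _)
      (fun n => Eventually.of_forall fun t => by simpa using hbd n t)
      (ae_restrict_of_ae hconv)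
  have hrhs : Tendsto (fun n => A b - A a + 2 * (K : ℝ) * c n) atTop (nhds (A b - A a)) := by
    have h2 : Tendsto (fun n : ℕ => 2 * (K : ℝ) * c n) atTop (nhds (2 * (K:ℝ) * 0)) :=
      hc0.const_mul _
    have h3 : Tendsto (fun _ : ℕ => A b - A a) atTop (nhds (A b - A a)) :=
      tendsto_const_nhds
    simpa using h3.add h2
  have := le_of_tendsto_of_tendsto' hDCT hrhs (fun n => by
    have := key n
    rwa [intervalIntegral.integral_of_le hab] at this)
  rwa [intervalIntegral.integral_of_le hab]

/-- FTC-type inequality for functions Lipschitz on `Icc a b`. -/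
lemma lipOn_integral_deriv_le {K : NNReal} {α : ℝ → ℝ} {a b : ℝ} (hab : a ≤ b)
    (hα : LipschitzOnWith K α (Icc a b)) :
    ∫ t in a..b, deriv α t ≤ α b - α a := by
  obtain ⟨A, hA, hAeq⟩ := hα.extend_real
  have hsing : ∀ᵐ t : ℝ ∂(volume : Measure ℝ), t ≠ b := by
    have h0 : (volume : Measure ℝ) {b} = 0 := measure_singleton b
    filter_upwards [compl_mem_ae_iff.mpr h0] with t ht
    simpa using ht
  have hcong : ∫ t in a..b, deriv α t = ∫ t in a..b, deriv A t := by
    rw [intervalIntegral.integral_of_le hab, intervalIntegral.integral_of_le hab]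
    refine setIntegral_congr_ae measurableSet_Ioc ?_
    filter_upwards [hsing] with t ht hm
    exact deriv_eq_of_ioo hAeq ⟨hm.1, lt_of_le_of_ne hm.2 ht⟩
  rw [hcong, show α b = A b from hAeq (right_mem_Icc.mpr hab),
    show α a = A a from hAeq (left_mem_Icc.mpr hab)]
  exact lip_integral_deriv_le hA hab

/-- Integrability of the Lorentzian length integrand. -/
lemma intervalIntegrable_sqrt_aux {K : NNReal} {α : ℝ → ℝ} (β : ℝ → ℝ) {a b : ℝ} (hab : a ≤ b)
    (hα : LipschitzOnWith K α (Icc a b)) (F : ℝ → ℝ)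
    (hF : ContinuousOn (fun t => F (α t)) (Icc a b)) :
    IntervalIntegrable
      (fun t => Real.sqrt ((deriv α t) ^ 2 - (F (α t)) ^ 2 * (deriv β t) ^ 2)) volume a b := by
  rw [intervalIntegrable_iff_integrableOn_Icc_of_le hab]
  have h1 : AEMeasurable (fun t => deriv α t) (volume.restrict (Icc a b)) :=
    (measurable_deriv α).aemeasurable
  have h2 : AEMeasurable (fun t => deriv β t) (volume.restrict (Icc a b)) :=
    (measurable_deriv β).aemeasurable
  have h3 : AEMeasurable (fun t => F (α t)) (volume.restrict (Icc a b)) :=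
    hF.aemeasurable measurableSet_Icc
  have hmeas : AEStronglyMeasurable
      (fun t => Real.sqrt ((deriv α t) ^ 2 - (F (α t)) ^ 2 * (deriv β t) ^ 2))
      (volume.restrict (Icc a b)) := by
    have := ((h1.pow_const 2).sub ((h3.pow_const 2).mul (h2.pow_const 2)))
    exact (Real.continuous_sqrt.measurable.comp_aemeasurable this).aestronglyMeasurable
  refine Integrable.mono' (integrable_const (K : ℝ)) hmeas ?_
  filter_upwards [ae_deriv_abs_le hα] with t ht
  rw [Real.norm_eq_abs, abs_of_nonneg (Real.sqrt_nonneg _)]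
  refine le_trans ?_ ht
  rw [← Real.sqrt_sq_eq_abs]
  apply Real.sqrt_le_sqrt
  nlinarith [sq_nonneg (F (α t)), sq_nonneg (deriv β t)]

/-- Integrability of `deriv α`. -/
lemma intervalIntegrable_deriv_aux {K : NNReal} {α : ℝ → ℝ} {a b : ℝ} (hab : a ≤ b)
    (hα : LipschitzOnWith K α (Icc a b)) :
    IntervalIntegrable (fun t => deriv α t) volume a b := by
  rw [intervalIntegrable_iff_integrableOn_Icc_of_le hab]
  refine Integrable.mono' (integrable_const (K : ℝ))
    (measurable_deriv α).aestronglyMeasurable ?_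
  filter_upwards [ae_deriv_abs_le hα] with t ht
  simpa using ht

/-- If `0 ≤ g ≤ f` on `I`, then the Lorentzian length of any `f`-causal curve w.r.t. `f`
is at most its length w.r.t. `g`, and the time separation functions satisfy
`τ_{−I×_f[0,L]} ≤ τ_{−I×_g[0,L]}` on causally related pairs. -/
theorem stmt_1 (I : Set ℝ) (L : ℝ) (hL : 0 < L) (f g : ℝ → ℝ)
    (hf : ContinuousOn f I) (hg : ContinuousOn g I)
    (hf0 : ∀ x ∈ I, 0 ≤ f x) (hg0 : ∀ x ∈ I, 0 ≤ g x)
    (hgf : ∀ x ∈ I, g x ≤ f x) :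
    (∀ a b α β, FutureCausal I L f a b α β → LorLen f a b α β ≤ LorLen g a b α β) ∧
    (∀ p q : ℝ × ℝ,
      (∃ a b α β, FutureCausal I L f a b α β ∧ (α a, β a) = p ∧ (α b, β b) = q) →
      tauW I L f p q ≤ tauW I L g p q) := by
  -- Part 1: length comparison
  have part1 : ∀ a b α β, FutureCausal I L f a b α β →
      LorLen f a b α β ≤ LorLen g a b α β := by
    rintro a b α β ⟨⟨hab, ⟨K, hα⟩, ⟨K', hβ⟩, hmapα, hmapβ⟩, hae⟩
    have hαcont : ContinuousOn α (Icc a b) := hα.continuousOn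
    have hfα : ContinuousOn (fun t => f (α t)) (Icc a b) := hf.comp hαcont hmapα
    have hgα : ContinuousOn (fun t => g (α t)) (Icc a b) := hg.comp hαcont hmapα
    refine intervalIntegral.integral_mono_ae_restrict hab.le
      (intervalIntegrable_sqrt_aux β hab.le hα f hfα)
      (intervalIntegrable_sqrt_aux β hab.le hα g hgα) ?_
    filter_upwards [ae_restrict_mem measurableSet_Icc] with t ht
    have hI : α t ∈ I := hmapα ht
    have hsq : g (α t) ^ 2 ≤ f (α t) ^ 2 := by
      have := hgf _ hI; have := hg0 _ hI; nlinarith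
    apply Real.sqrt_le_sqrt
    nlinarith [sq_nonneg (deriv β t)]
  refine ⟨part1, ?_⟩
  -- Part 2: time separation comparison
  intro p q _hpq
  -- endpoint bound for any g-causal curve from p to q
  have hbound : ∀ r ∈ insert (0:ℝ) {r | ∃ a b α β, FutureCausal I L g a b α β ∧
      (α a, β a) = p ∧ (α b, β b) = q ∧ r = LorLen g a b α β}, r ≤ max 0 (q.1 - p.1) := by
    rintro r hr
    rcases hr with rfl | ⟨a, b, α, β, ⟨⟨hab, ⟨K, hα⟩, ⟨K', hβ⟩, hmapα, hmapβ⟩, hae⟩, hp, hq', rfl⟩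
    · exact le_max_left _ _
    · refine le_trans ?_ (le_max_right _ _)
      have hαcont : ContinuousOn α (Icc a b) := hα.continuousOn
      have hgα : ContinuousOn (fun t => g (α t)) (Icc a b) := hg.comp hαcont hmapα
      have step1 : LorLen g a b α β ≤ ∫ t in a..b, deriv α t := by
        refine intervalIntegral.integral_mono_ae_restrict hab.le
          (intervalIntegrable_sqrt_aux β hab.le hα g hgα)
          (intervalIntegrable_deriv_aux hab.le hα) ?_
        filter_upwards [hae] with t ht
        have h1 : Real.sqrt ((deriv α t) ^ 2 - (g (α t)) ^ 2 * (deriv β t) ^ 2)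
            ≤ Real.sqrt ((deriv α t) ^ 2) := by
          apply Real.sqrt_le_sqrt
          nlinarith [sq_nonneg (g (α t)), sq_nonneg (deriv β t)]
        calc Real.sqrt ((deriv α t) ^ 2 - (g (α t)) ^ 2 * (deriv β t) ^ 2)
            ≤ Real.sqrt ((deriv α t) ^ 2) := h1
          _ = |deriv α t| := Real.sqrt_sq_eq_abs _
          _ = deriv α t := abs_of_nonneg ht.1
      have step2 : ∫ t in a..b, deriv α t ≤ α b - α a :=
        lipOn_integral_deriv_le hab.le hα
      have hend : α b - α a = q.1 - p.1 := by
        rw [← hp, ← hq']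
      linarith [step1, step2, hend.le, hend.ge]
  have hbddg : BddAbove (insert (0:ℝ) {r | ∃ a b α β, FutureCausal I L g a b α β ∧
      (α a, β a) = p ∧ (α b, β b) = q ∧ r = LorLen g a b α β}) :=
    ⟨max 0 (q.1 - p.1), hbound⟩
  unfold tauW
  refine csSup_le (insert_nonempty _ _) ?_
  rintro r hr
  rcases hr with rfl | ⟨a, b, α, β, hγf, hp, hq', rfl⟩
  · exact le_csSup hbddg (mem_insert _ _)
  · -- the same curve is g-causal
    have hγg : FutureCausal I L g a b α β := by
      refine ⟨hγf.1, ?_⟩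
      obtain ⟨⟨hab, ⟨K, hα⟩, _, hmapα, _⟩, hae⟩ := hγf
      filter_upwards [hae, ae_restrict_mem measurableSet_Icc] with t ht htI
      have hI : α t ∈ I := hmapα htI
      have hsq : g (α t) ^ 2 ≤ f (α t) ^ 2 := by
        have := hgf _ hI; have := hg0 _ hI; nlinarith
      refine ⟨ht.1, le_trans ?_ ht.2⟩
      nlinarith [sq_nonneg (deriv β t), ht.2]
    have hmem : LorLen g a b α β ∈ insert (0:ℝ) {r | ∃ a b α β, FutureCausal I L g a b α β ∧
        (α a, β a) = p ∧ (α b, β b) = q ∧ r = LorLen g a b α β} :=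
      mem_insert_of_mem _ ⟨a, b, α, β, hγg, hp, hq', rfl⟩
    exact (part1 a b α β hγf).trans (le_csSup hbddg hmem)
end

section
/- Let γ = (α, β) be an admissible curve with Lipschitz components defined on [a,b], with values in I × [0,L], such that (α')² − (f∘α)²(β')² ≥ 1/(4l²) a.e. for a continuous f : I → (0,∞) and l > 0. Then for all sufficiently small η > 0 one has (α')² − ((f∘α)+η)²(β')² > 0 a.e., and moreover √((α')² − (f+η)²∘α·(β')²) ≥ √((α')² − f²∘α·(β')²) − C·√η·|β'| a.e. for a constant C depending only on sup f. -/
open MeasureTheory Set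


private lemma stmt_2_aux (A B F M η l K : ℝ) (hl : 0 < l) (hM : 0 < M) (hη : 0 < η)
    (hηM : η < M) (hη₂ : η < 1 / (12 * M * l ^ 2 * (K ^ 2 + 1)))
    (hF0 : 0 ≤ F) (hFM : F ≤ M) (hB2 : B ^ 2 ≤ K ^ 2)
    (ht : 1 / (4 * l ^ 2) ≤ A ^ 2 - F ^ 2 * B ^ 2) :
    0 < A ^ 2 - (F + η) ^ 2 * B ^ 2 ∧
    Real.sqrt (A ^ 2 - F ^ 2 * B ^ 2) - Real.sqrt (3 * M) * Real.sqrt η * |B|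
      ≤ Real.sqrt (A ^ 2 - (F + η) ^ 2 * B ^ 2) := by
  have hkey : A ^ 2 - (F + η) ^ 2 * B ^ 2
      = (A ^ 2 - F ^ 2 * B ^ 2) - (2 * F * η + η ^ 2) * B ^ 2 := by ring
  have hD0 : 0 ≤ (2 * F * η + η ^ 2) * B ^ 2 := by positivity
  have hD_le : (2 * F * η + η ^ 2) * B ^ 2 ≤ 3 * M * η * B ^ 2 := by
    nlinarith [sq_nonneg B]
  have hD_lt : 3 * M * η * B ^ 2 < 1 / (4 * l ^ 2) := by
    have h1 : 3 * M * η * B ^ 2 ≤ 3 * M * η * K ^ 2 := by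
      nlinarith [mul_pos hM hη]
    have h2 : 3 * M * η * K ^ 2 < 1 / (4 * l ^ 2) := by
      rw [lt_div_iff₀ (by positivity)] at hη₂ ⊢
      nlinarith [sq_nonneg K, mul_pos hM hη,
        mul_pos (mul_pos hM hη) (by positivity : (0:ℝ) < l ^ 2)]
    linarith
  have hXpos : 0 < A ^ 2 - (F + η) ^ 2 * B ^ 2 := by rw [hkey]; linarith
  refine ⟨hXpos, ?_⟩
  set X := A ^ 2 - F ^ 2 * B ^ 2 with hXdef
  set D := (2 * F * η + η ^ 2) * B ^ 2 with hDdef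
  have hXD0 : 0 ≤ X - D := by rw [← hkey]; exact hXpos.le
  have hsplit : Real.sqrt X ≤ Real.sqrt (X - D) + Real.sqrt D := by
    have h1 : X ≤ (Real.sqrt (X - D) + Real.sqrt D) ^ 2 := by
      nlinarith [Real.sq_sqrt hXD0, Real.sq_sqrt hD0, Real.sqrt_nonneg (X - D),
        Real.sqrt_nonneg D]
    calc Real.sqrt X ≤ Real.sqrt ((Real.sqrt (X - D) + Real.sqrt D) ^ 2) :=
          Real.sqrt_le_sqrt h1
      _ = Real.sqrt (X - D) + Real.sqrt D := Real.sqrt_sq (by positivity)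
  have hsqD : Real.sqrt D ≤ Real.sqrt (3 * M) * Real.sqrt η * |B| := by
    have h1 : Real.sqrt D ≤ Real.sqrt (3 * M * η * B ^ 2) :=
      Real.sqrt_le_sqrt hD_le
    have h2 : Real.sqrt (3 * M * η * B ^ 2)
        = Real.sqrt (3 * M) * Real.sqrt η * |B| := by
      rw [show 3 * M * η * B ^ 2 = (3 * M) * (η * B ^ 2) by ring,
        Real.sqrt_mul (by linarith), Real.sqrt_mul hη.le, Real.sqrt_sq_eq_abs]
      ring
    exact h1.trans h2.le
  rw [hkey]
  linarith

/-- If `γ = (α,β)` is an admissible Lipschitz curve in `I × [0,L]` with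
`(α')² − (f∘α)²(β')² ≥ 1/(4l²)` a.e., then there are `C > 0` (depending only on `sup f`)
and `η₀ > 0` such that for all `0 < η < η₀`, a.e. one has
`(α')² − ((f∘α)+η)²(β')² > 0` and
`√((α')² − ((f∘α)+η)²(β')²) ≥ √((α')² − (f∘α)²(β')²) − C √η |β'|`. -/
theorem stmt_2 (I : Set ℝ) (hI : IsCompact I) (hIne : I.Nonempty)
    (f : ℝ → ℝ) (hf : ContinuousOn f I) (hfpos : ∀ x ∈ I, 0 < f x)
    (a b L : ℝ) (hab : a < b) (hL : 0 < L) (l : ℝ) (hl : 0 < l)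
    (α β : ℝ → ℝ) (Kα Kβ : NNReal)
    (hα : LipschitzOnWith Kα α (Icc a b)) (hβ : LipschitzOnWith Kβ β (Icc a b))
    (hαI : MapsTo α (Icc a b) I) (hβL : MapsTo β (Icc a b) (Icc 0 L))
    (hcausal : ∀ᵐ t ∂(volume.restrict (Icc a b)),
      1 / (4 * l ^ 2) ≤ (deriv α t) ^ 2 - (f (α t)) ^ 2 * (deriv β t) ^ 2) :
    ∃ C > 0, ∃ η₀ > 0, ∀ η : ℝ, 0 < η → η < η₀ →
      ∀ᵐ t ∂(volume.restrict (Icc a b)),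
        0 < (deriv α t) ^ 2 - (f (α t) + η) ^ 2 * (deriv β t) ^ 2 ∧
        Real.sqrt ((deriv α t) ^ 2 - (f (α t)) ^ 2 * (deriv β t) ^ 2)
            - C * Real.sqrt η * |deriv β t|
          ≤ Real.sqrt ((deriv α t) ^ 2 - (f (α t) + η) ^ 2 * (deriv β t) ^ 2) := by
  obtain ⟨x₀, hx₀I, hmax⟩ := hI.exists_isMaxOn hIne hf
  have hM : 0 < f x₀ := hfpos _ hx₀I
  refine ⟨Real.sqrt (3 * f x₀), Real.sqrt_pos.2 (by linarith),
    min (f x₀) (1 / (12 * f x₀ * l ^ 2 * ((Kβ : ℝ) ^ 2 + 1))),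
    lt_min hM (by positivity), ?_⟩
  intro η hη hηη₀
  have hηM : η < f x₀ := lt_of_lt_of_le hηη₀ (min_le_left _ _)
  have hη₂ : η < 1 / (12 * f x₀ * l ^ 2 * ((Kβ : ℝ) ^ 2 + 1)) :=
    lt_of_lt_of_le hηη₀ (min_le_right _ _)
  have hβ' : ∀ t ∈ Ioo a b, |deriv β t| ≤ (Kβ : ℝ) := by
    intro t ht
    by_cases hd : DifferentiableAt ℝ β t
    · have hnhds : Icc a b ∈ nhds t := Icc_mem_nhds ht.1 ht.2
      have := (hd.hasDerivAt.hasFDerivAt).le_of_lipschitzOn hnhds hβ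
      simpa [Real.norm_eq_abs] using this
    · simp [deriv_zero_of_not_differentiableAt hd]
  have hIoo : ∀ᵐ t ∂(volume.restrict (Icc a b)), t ∈ Ioo a b := by
    rw [← Measure.restrict_congr_set Ioo_ae_eq_Icc]
    exact ae_restrict_mem measurableSet_Ioo
  filter_upwards [hcausal, hIoo] with t ht htIoo
  have htIcc : t ∈ Icc a b := Ioo_subset_Icc_self htIoo
  have hB2 : (deriv β t) ^ 2 ≤ (Kβ : ℝ) ^ 2 := by
    have := hβ' t htIoo
    nlinarith [abs_nonneg (deriv β t), sq_abs (deriv β t)]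
  exact stmt_2_aux (deriv α t) (deriv β t) (f (α t)) (f x₀) η l (Kβ : ℝ) hl hM hη
    hηM hη₂ (hfpos _ (hαI htIcc)).le (hmax (hαI htIcc)) hB2 ht
end

section
/- Let f : [a,b] → ℝ be continuous and λ-concave on (a,b) (i.e., f(t) − (λ/2)t² is concave). If f_i : [a_i,b_i] → ℝ are λ-concave continuous functions, [a_i,b_i] → [a,b] (a_i→a, b_i→b), f_i → f uniformly, and x_i → x with x_i ∈ [a_i,b_i], x ∈ [a,b], then liminf_{i→∞} |∂f_i|(x_i) ≥ |∂f|(x), where |∂g|(x) = max{ d⁺g/dt(x), −d⁻g/dt(x), 0 } is the local slope (with the convention d⁻g/dt(a) = +∞ and d⁺g/dt(b) = −∞). -/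
open Filter Set Topology

/-- The local slope `|∂g|(x) = limsup_{y→x, y∈s} (g(y)−g(x))⁺/|y−x|` of a function on a
set `s` (at an interior point this is `max{d⁺g(x), −d⁻g(x), 0}`; the one-sided boundary
conventions of the paper are automatically encoded by taking the limsup within `s`). -/
noncomputable def locSlope (g : ℝ → ℝ) (s : Set ℝ) (x : ℝ) : EReal :=
  Filter.limsup (fun y => ((max (g y - g x) 0 / |y - x| : ℝ) : EReal)) (𝓝[s \ {x}] x)

lemma concaveOn_Icc_of_Ioo {u v : ℝ} (huv : u < v) {g : ℝ → ℝ}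
    (hconc : ConcaveOn ℝ (Ioo u v) g) (hc : ContinuousOn g (Icc u v)) :
    ConcaveOn ℝ (Icc u v) g := by
  refine ⟨convex_Icc u v, ?_⟩
  intro p hp q hq α β hα hβ hab
  set w : ℝ := (u + v) / 2 with hw
  have hwmem : w ∈ Ioo u v := ⟨by simp only [hw]; linarith, by simp only [hw]; linarith⟩
  -- approximating points
  have hmem : ∀ r ∈ Icc u v, ∀ θ ∈ Ioo (0:ℝ) 1, (1 - θ) * r + θ * w ∈ Ioo u v := by
    intro r hr θ hθ
    constructor
    · nlinarith [hr.1, hwmem.1, hθ.1, hθ.2]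
    · nlinarith [hr.2, hwmem.2, hθ.1, hθ.2]
  have hIoosub : Ioo u v ⊆ Icc u v := Ioo_subset_Icc_self
  -- tendsto of approximations
  have htend : ∀ r ∈ Icc u v,
      Tendsto (fun θ : ℝ => g ((1 - θ) * r + θ * w)) (𝓝[Ioo (0:ℝ) 1] 0) (𝓝 (g r)) := by
    intro r hr
    have h1 : Tendsto (fun θ : ℝ => (1 - θ) * r + θ * w) (𝓝 0) (𝓝 r) := by
      have : Continuous (fun θ : ℝ => (1 - θ) * r + θ * w) := by fun_prop
      simpa using this.tendsto 0
    have h2 : Tendsto (fun θ : ℝ => (1 - θ) * r + θ * w) (𝓝[Ioo (0:ℝ) 1] 0) (𝓝[Icc u v] r) := by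
      rw [tendsto_nhdsWithin_iff]
      exact ⟨h1.mono_left nhdsWithin_le_nhds,
        eventually_mem_nhdsWithin.mono fun θ hθ => hIoosub (hmem r hr θ hθ)⟩
    exact (hc r hr).tendsto.comp h2
  have hcomb : α * p + β * q ∈ Icc u v := by
    have := (convex_Icc u v) hp hq hα hβ hab
    simpa using this
  haveI : (𝓝[Ioo (0:ℝ) 1] 0).NeBot := by
    rw [← mem_closure_iff_nhdsWithin_neBot, closure_Ioo (by norm_num : (0:ℝ) ≠ 1)]
    exact ⟨le_refl _, by norm_num⟩
  have key : ∀ θ ∈ Ioo (0:ℝ) 1,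
      α * g ((1 - θ) * p + θ * w) + β * g ((1 - θ) * q + θ * w)
        ≤ g ((1 - θ) * (α * p + β * q) + θ * w) := by
    intro θ hθ
    have h := hconc.2 (hmem p hp θ hθ) (hmem q hq θ hθ) hα hβ hab
    simp only [smul_eq_mul] at h
    have heq : α * ((1 - θ) * p + θ * w) + β * ((1 - θ) * q + θ * w)
        = (1 - θ) * (α * p + β * q) + θ * w := by linear_combination θ * w * hab
    rwa [heq] at h
  have hL : Tendsto (fun θ : ℝ => α * g ((1 - θ) * p + θ * w) + β * g ((1 - θ) * q + θ * w))
      (𝓝[Ioo (0:ℝ) 1] 0) (𝓝 (α * g p + β * g q)) :=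
    ((htend p hp).const_mul α).add ((htend q hq).const_mul β)
  have hR : Tendsto (fun θ : ℝ => g ((1 - θ) * (α * p + β * q) + θ * w))
      (𝓝[Ioo (0:ℝ) 1] 0) (𝓝 (g (α * p + β * q))) := htend _ hcomb
  have hev : ∀ᶠ θ in 𝓝[Ioo (0:ℝ) 1] 0,
      α * g ((1 - θ) * p + θ * w) + β * g ((1 - θ) * q + θ * w)
        ≤ g ((1 - θ) * (α * p + β * q) + θ * w) :=
    eventually_mem_nhdsWithin.mono fun θ hθ => key θ hθ
  have := le_of_tendsto_of_tendsto hL hR hev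
  simpa [smul_eq_mul] using this

lemma nebot_Icc_diff {u v x : ℝ} (huv : u < v) (hx : x ∈ Icc u v) :
    (𝓝[Icc u v \ {x}] x).NeBot := by
  rw [← mem_closure_iff_nhdsWithin_neBot]
  rcases lt_or_eq_of_le hx.2 with h | h
  · refine closure_mono (show Ioc x v ⊆ Icc u v \ {x} from ?_) ?_
    · intro z hz; exact ⟨⟨le_trans hx.1 hz.1.le, hz.2⟩, ne_of_gt hz.1⟩
    · rw [closure_Ioc (ne_of_lt h)]; exact ⟨le_refl _, h.le⟩
  · subst h
    refine closure_mono (show Ico u x ⊆ Icc u x \ {x} from ?_) ?_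
    · intro z hz; exact ⟨⟨hz.1, hz.2.le⟩, ne_of_lt hz.2⟩
    · rw [closure_Ico huv.ne]; exact ⟨huv.le, le_refl _⟩

lemma locSlope_nonneg {u v x : ℝ} (huv : u < v) (hx : x ∈ Icc u v) (g : ℝ → ℝ) :
    (0 : EReal) ≤ locSlope g (Icc u v) x := by
  haveI := nebot_Icc_diff huv hx
  refine le_limsup_of_frequently_le' (Frequently.of_forall fun y => ?_)
  have : (0:ℝ) ≤ max (g y - g x) 0 / |y - x| := div_nonneg (le_max_right _ _) (abs_nonneg _)
  exact_mod_cast this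

lemma slope_lower (lam : ℝ) {u v : ℝ} (F : ℝ → ℝ)
    (hconc : ConcaveOn ℝ (Icc u v) (fun t => F t - lam / 2 * t ^ 2))
    {p q : ℝ} (hp : p ∈ Icc u v) (hq : q ∈ Icc u v) (hpq : p ≠ q) :
    (((F q - F p) / |q - p| - |lam| / 2 * |q - p| : ℝ) : EReal) ≤ locSlope F (Icc u v) p := by
  set S : Set ℝ := openSegment ℝ p q with hSdef
  have hS : S = Ioo (min p q) (max p q) := openSegment_eq_Ioo' hpq
  have hSsub : S ⊆ Icc u v \ {p} := by
    rw [hS]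
    intro z hz
    refine ⟨Icc_subset_Icc (le_min hp.1 hq.1) (max_le hp.2 hq.2) (Ioo_subset_Icc_self hz), ?_⟩
    rcases le_total p q with h | h
    · simp only [mem_singleton_iff]
      rw [min_eq_left h] at hz; exact ne_of_gt hz.1
    · simp only [mem_singleton_iff]
      rw [max_eq_left h] at hz; exact ne_of_lt hz.2
  haveI hne : (𝓝[S] p).NeBot := by
    rw [← mem_closure_iff_nhdsWithin_neBot, hS, closure_Ioo (min_lt_max.2 hpq).ne]
    exact ⟨min_le_left _ _, le_max_left _ _⟩
  have hm : (0:ℝ) < |q - p| := abs_pos.2 (sub_ne_zero.2 (Ne.symm hpq))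
  have hpoint : ∀ z ∈ S,
      (F q - F p) / |q - p| - |lam| / 2 * |q - p| ≤ max (F z - F p) 0 / |z - p| := by
    intro z hz
    rw [hSdef, openSegment] at hz
    obtain ⟨α, β, hα, hβ, hab, hzeq⟩ := hz
    simp only [smul_eq_mul] at hzeq
    have hzp : z - p = β * (q - p) := by linear_combination p * hab - hzeq
    have hzpabs : |z - p| = β * |q - p| := by
      rw [hzp, abs_mul, abs_of_pos hβ]
    have hzppos : (0:ℝ) < |z - p| := by rw [hzpabs]; positivity
    have hkey : β * (F q - F p) - lam / 2 * α * β * (q - p) ^ 2 ≤ F z - F p := by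
      have h := hconc.2 hp hq hα.le hβ.le hab
      simp only [smul_eq_mul] at h
      rw [hzeq] at h
      have hz2 : z ^ 2 = α * p ^ 2 + β * q ^ 2 - α * β * (q - p) ^ 2 := by
        have h1 : z = α * p + β * q := hzeq.symm
        have h2 : β = 1 - α := by linarith
        rw [h1, h2]; ring
      rw [hz2] at h
      have hco : α * F p + β * F p = F p := by linear_combination F p * hab
      linarith [h, hco]
    have hq2 : |q - p| ^ 2 = (q - p) ^ 2 := sq_abs _
    rw [le_div_iff₀ hzppos, hzpabs]
    have h1 : lam / 2 * α * β * (q - p) ^ 2 ≤ |lam| / 2 * |q - p| * (β * |q - p|) := by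
      have hl : lam ≤ |lam| := le_abs_self lam
      have hα1 : α ≤ 1 := by linarith
      have hla : lam * α ≤ |lam| :=
        le_trans (mul_le_mul_of_nonneg_right hl hα.le)
          (by simpa using mul_le_mul_of_nonneg_left hα1 (abs_nonneg lam))
      calc lam / 2 * α * β * (q - p) ^ 2 = (lam * α) * (β * (q - p) ^ 2) / 2 := by ring
        _ ≤ |lam| * (β * (q - p) ^ 2) / 2 := by
            have := mul_le_mul_of_nonneg_right hla (show (0:ℝ) ≤ β * (q - p) ^ 2 by positivity)
            linarith
        _ = |lam| / 2 * |q - p| * (β * |q - p|) := by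
            rw [show |lam| / 2 * |q - p| * (β * |q - p|) = |lam| * (β * |q - p| ^ 2) / 2 from by
              ring, hq2]
    have h2 : ((F q - F p) / |q - p|) * (β * |q - p|) = β * (F q - F p) := by
      field_simp
    have h3 : F z - F p ≤ max (F z - F p) 0 := le_max_left _ _
    linarith [hkey, h1, h2, h3]
  have hfreq : ∃ᶠ z in 𝓝[S] p,
      (((F q - F p) / |q - p| - |lam| / 2 * |q - p| : ℝ) : EReal)
        ≤ ((max (F z - F p) 0 / |z - p| : ℝ) : EReal) :=
    (eventually_mem_nhdsWithin.mono fun z hz => EReal.coe_le_coe_iff.2 (hpoint z hz)).frequently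
  calc (((F q - F p) / |q - p| - |lam| / 2 * |q - p| : ℝ) : EReal)
      ≤ limsup (fun z => ((max (F z - F p) 0 / |z - p| : ℝ) : EReal)) (𝓝[S] p) :=
        le_limsup_of_frequently_le' hfreq
    _ ≤ locSlope F (Icc u v) p :=
        limsup_le_limsup_of_le (nhdsWithin_mono p hSsub)

lemma tendsto_fs_const {f : ℝ → ℝ} {as bs : ℕ → ℝ} {fs : ℕ → ℝ → ℝ}
    (hunif : ∀ ε > (0:ℝ), ∃ N, ∀ i ≥ N, ∀ x ∈ Icc (as i) (bs i), |fs i x - f x| ≤ ε)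
    {q : ℝ} (hq : ∀ᶠ i in atTop, q ∈ Icc (as i) (bs i)) :
    Tendsto (fun i => fs i q) atTop (𝓝 (f q)) := by
  rw [Metric.tendsto_atTop]
  intro ε hε
  obtain ⟨N1, hN1⟩ := hunif (ε / 2) (by linarith)
  obtain ⟨N2, hN2⟩ := eventually_atTop.1 hq
  refine ⟨max N1 N2, fun n hn => ?_⟩
  have h1 := hN1 n (le_trans (le_max_left _ _) hn) q (hN2 n (le_trans (le_max_right _ _) hn))
  rw [Real.dist_eq]
  linarith [abs_nonneg (fs n q - f q)]

lemma aux_left (lam a b : ℝ) (hab : a < b) (f : ℝ → ℝ)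
    (hfc : ContinuousOn f (Icc a b))
    (as bs : ℕ → ℝ)
    (ha : Tendsto as atTop (𝓝 a)) (hb : Tendsto bs atTop (𝓝 b))
    (fs : ℕ → ℝ → ℝ)
    (hconc : ∀ i, ConcaveOn ℝ (Icc (as i) (bs i)) (fun t => fs i t - lam / 2 * t ^ 2))
    (hunif : ∀ ε > (0:ℝ), ∃ N, ∀ i ≥ N, ∀ x ∈ Icc (as i) (bs i), |fs i x - f x| ≤ ε)
    (xs : ℕ → ℝ) (hxs : ∀ i, xs i ∈ Icc (as i) (bs i))
    (hxa : Tendsto xs atTop (𝓝 a)) (e : ℝ) (he : 0 < e) :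
    ∀ᶠ i in atTop, fs i (xs i) ≤ f a + e := by
  set q2 : ℝ := (a + b) / 2 with hq2def
  have haq2 : a < q2 := by simp only [hq2def]; linarith
  have hq2b : q2 < b := by simp only [hq2def]; linarith
  set G : ℝ → ℝ := fun t => f t - lam / 2 * t ^ 2 with hGdef
  have hGc : ContinuousOn G (Icc a b) := hfc.sub (Continuous.continuousOn (by fun_prop))
  -- choose q1 close to a
  haveI : (𝓝[Ioo a q2] a).NeBot := by
    rw [← mem_closure_iff_nhdsWithin_neBot, closure_Ioo haq2.ne]
    exact ⟨le_refl _, haq2.le⟩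
  have hsub : Ioo a q2 ⊆ Icc a b := fun z hz => ⟨hz.1.le, le_trans hz.2.le hq2b.le⟩
  have hGt : Tendsto G (𝓝[Ioo a q2] a) (𝓝 (G a)) :=
    (hGc a ⟨le_refl _, hab.le⟩).tendsto.mono_left (nhdsWithin_mono a hsub)
  have hKt : Tendsto (fun r : ℝ => (r - a) / (q2 - r)) (𝓝[Ioo a q2] a) (𝓝 0) := by
    have hc : ContinuousAt (fun r : ℝ => (r - a) / (q2 - r)) a :=
      ContinuousAt.div (by fun_prop) (by fun_prop) (by simp; linarith)
    have := hc.tendsto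
    simp only [sub_self, zero_div] at this
    exact this.mono_left nhdsWithin_le_nhds
  have hΦt : Tendsto (fun r : ℝ => G r + (r - a) / (q2 - r) * (G r - G q2))
      (𝓝[Ioo a q2] a) (𝓝 (G a)) := by
    have hGq2 : Tendsto (fun _ : ℝ => G q2) (𝓝[Ioo a q2] a) (𝓝 (G q2)) := tendsto_const_nhds
    have := hGt.add (hKt.mul (hGt.sub hGq2))
    simpa using this
  obtain ⟨q1, hΦ, hq1mem⟩ :=
    ((hΦt.eventually (gt_mem_nhds (show G a < G a + e / 4 by linarith))).and
      eventually_mem_nhdsWithin).exists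
  -- eventual facts
  have e1 : ∀ᶠ i in atTop, as i < q1 := ha.eventually (gt_mem_nhds hq1mem.1)
  have e2 : ∀ᶠ i in atTop, q2 < bs i := hb.eventually (lt_mem_nhds hq2b)
  have e3 : ∀ᶠ i in atTop, xs i < q1 := hxa.eventually (gt_mem_nhds hq1mem.1)
  have hq1q2 : q1 < q2 := hq1mem.2
  have hq1Icc : ∀ᶠ i in atTop, q1 ∈ Icc (as i) (bs i) := by
    filter_upwards [e1, e2] with i h1 h2
    exact ⟨h1.le, by linarith⟩
  have hq2Icc : ∀ᶠ i in atTop, q2 ∈ Icc (as i) (bs i) := by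
    filter_upwards [e1, e2] with i h1 h2
    exact ⟨by linarith, h2.le⟩
  have hT1 : Tendsto (fun i => fs i q1) atTop (𝓝 (f q1)) := tendsto_fs_const hunif hq1Icc
  have hT2 : Tendsto (fun i => fs i q2) atTop (𝓝 (f q2)) := tendsto_fs_const hunif hq2Icc
  have hKit : Tendsto (fun i => (q1 - xs i) / (q2 - q1)) atTop (𝓝 ((q1 - a) / (q2 - q1))) :=
    (tendsto_const_nhds.sub hxa).div_const _
  have hRt : Tendsto (fun i =>
      (fs i q1 - lam / 2 * q1 ^ 2) + (q1 - xs i) / (q2 - q1) *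
        ((fs i q1 - lam / 2 * q1 ^ 2) - (fs i q2 - lam / 2 * q2 ^ 2)))
      atTop (𝓝 (G q1 + (q1 - a) / (q2 - q1) * (G q1 - G q2))) := by
    exact ((hT1.sub tendsto_const_nhds).add
      (hKit.mul ((hT1.sub tendsto_const_nhds).sub (hT2.sub tendsto_const_nhds))))
  have e4 : ∀ᶠ i in atTop,
      (fs i q1 - lam / 2 * q1 ^ 2) + (q1 - xs i) / (q2 - q1) *
        ((fs i q1 - lam / 2 * q1 ^ 2) - (fs i q2 - lam / 2 * q2 ^ 2)) < G a + e / 2 :=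
    hRt.eventually (gt_mem_nhds (by linarith))
  have e5 : ∀ᶠ i in atTop, lam / 2 * (xs i) ^ 2 < lam / 2 * a ^ 2 + e / 4 := by
    have : Tendsto (fun i => lam / 2 * (xs i) ^ 2) atTop (𝓝 (lam / 2 * a ^ 2)) := by
      have hc : Continuous (fun r : ℝ => lam / 2 * r ^ 2) := by fun_prop
      exact (hc.tendsto a).comp hxa
    exact this.eventually (gt_mem_nhds (by linarith))
  filter_upwards [e1, e2, e3, e4, e5, hq2Icc] with i h1 h2 h3 h4 h5 h6
  -- concavity step
  set X : ℝ := fs i (xs i) - lam / 2 * (xs i) ^ 2 with hX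
  set Z : ℝ := fs i q1 - lam / 2 * q1 ^ 2 with hZ
  set Y : ℝ := fs i q2 - lam / 2 * q2 ^ 2 with hY
  set Ki : ℝ := (q1 - xs i) / (q2 - q1) with hKi
  have hd : (0:ℝ) < q2 - xs i := by linarith
  set α : ℝ := (q2 - q1) / (q2 - xs i) with hα
  set β : ℝ := (q1 - xs i) / (q2 - xs i) with hβ
  have hαpos : 0 < α := div_pos (by linarith) hd
  have hβpos : 0 < β := div_pos (by linarith) hd
  have hsum : α + β = 1 := by
    rw [hα, hβ, ← add_div, div_eq_one_iff_eq hd.ne']; ring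
  have hpt : α * xs i + β * q2 = q1 := by
    rw [hα, hβ]; field_simp; ring
  have hcon := (hconc i).2 (hxs i) h6 hαpos.le hβpos.le hsum
  simp only [smul_eq_mul] at hcon
  rw [hpt] at hcon
  rw [← hX, ← hZ, ← hY] at hcon
  -- hcon : α * X + β * Y ≤ Z
  have h6' : α * X ≤ Z - β * Y := by linarith [hcon]
  have hne1 : q2 - q1 ≠ 0 := sub_ne_zero.mpr hq1q2.ne'
  have hβα : β / α = Ki := by
    rw [hα, hβ, hKi]
    field_simp
  have h7 : X ≤ Z + Ki * (Z - Y) := by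
    have h8 : X = (α * X) / α := by field_simp
    rw [h8, div_le_iff₀ hαpos]
    have h9 : (Z + Ki * (Z - Y)) * α = α * Z + β * (Z - Y) := by
      rw [← hβα]; field_simp
    rw [h9]
    have hz : α * Z + β * Z = Z := by linear_combination Z * hsum
    linarith [h6', hz]
  have hfa : G a = f a - lam / 2 * a ^ 2 := by simp [hGdef]
  rw [hfa] at h4
  rw [hX, hZ, hY, hKi] at h7
  rw [hZ, hY, hKi] at h4
  linarith [h7, h4, h5]

lemma concave_neg_comp {lam u v : ℝ} {F : ℝ → ℝ}
    (h : ConcaveOn ℝ (Icc u v) (fun t => F t - lam / 2 * t ^ 2)) :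
    ConcaveOn ℝ (Icc (-v) (-u)) (fun t => F (-t) - lam / 2 * t ^ 2) := by
  refine ⟨convex_Icc _ _, ?_⟩
  intro p hp q hq α β hα hβ hs
  have hp' : -p ∈ Icc u v := ⟨by linarith [hp.2], by linarith [hp.1]⟩
  have hq' : -q ∈ Icc u v := ⟨by linarith [hq.2], by linarith [hq.1]⟩
  have h2 := h.2 hp' hq' hα hβ hs
  simp only [smul_eq_mul] at h2 ⊢
  have heq : α * -p + β * -q = -(α * p + β * q) := by ring
  rw [heq] at h2
  simp only [neg_neg, neg_sq] at h2 ⊢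
  convert h2 using 3 <;> rw [neg_sq]

lemma aux_ub (lam a b : ℝ) (hab : a < b) (f : ℝ → ℝ)
    (hfc : ContinuousOn f (Icc a b))
    (as bs : ℕ → ℝ)
    (ha : Tendsto as atTop (𝓝 a)) (hb : Tendsto bs atTop (𝓝 b))
    (fs : ℕ → ℝ → ℝ)
    (hconc : ∀ i, ConcaveOn ℝ (Icc (as i) (bs i)) (fun t => fs i t - lam / 2 * t ^ 2))
    (hunif : ∀ ε > (0:ℝ), ∃ N, ∀ i ≥ N, ∀ x ∈ Icc (as i) (bs i), |fs i x - f x| ≤ ε)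
    (xs : ℕ → ℝ) (hxs : ∀ i, xs i ∈ Icc (as i) (bs i))
    (x : ℝ) (hx : x ∈ Icc a b) (hxconv : Tendsto xs atTop (𝓝 x))
    (e : ℝ) (he : 0 < e) :
    ∀ᶠ i in atTop, fs i (xs i) ≤ f x + e := by
  rcases eq_or_lt_of_le hx.1 with h | hax
  · subst h
    exact aux_left lam _ b hab f hfc as bs ha hb fs hconc hunif xs hxs hxconv e he
  rcases eq_or_lt_of_le hx.2 with h | hxb
  · subst h
    have hfc' : ContinuousOn (fun t => f (-t)) (Icc (-x) (-a)) := by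
      refine hfc.comp continuous_neg.continuousOn ?_
      intro t ht
      exact ⟨by linarith [ht.2], by linarith [ht.1]⟩
    have hunif' : ∀ ε > (0:ℝ), ∃ N, ∀ i ≥ N, ∀ z ∈ Icc (-(bs i)) (-(as i)),
        |fs i (-z) - f (-z)| ≤ ε := by
      intro ε hε
      obtain ⟨N, hN⟩ := hunif ε hε
      exact ⟨N, fun i hi z hz => hN i hi (-z) ⟨by linarith [hz.2], by linarith [hz.1]⟩⟩
    have := aux_left lam (-x) (-a) (by linarith) (fun t => f (-t)) hfc'
      (fun i => -bs i) (fun i => -as i) hb.neg ha.neg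
      (fun i t => fs i (-t)) (fun i => concave_neg_comp (hconc i)) hunif'
      (fun i => -xs i) (fun i => by
        have h := hxs i
        constructor
        · show -bs i ≤ -xs i; linarith [h.2]
        · show -xs i ≤ -as i; linarith [h.1])
      hxconv.neg e he
    simpa using this
  · -- interior case
    have hmem : ∀ᶠ i in atTop, xs i ∈ Icc a b := by
      have : ∀ᶠ i in atTop, xs i ∈ Ioo a b :=
        hxconv.eventually (isOpen_Ioo.eventually_mem ⟨hax, hxb⟩)
      exact this.mono fun i hi => Ioo_subset_Icc_self hi
    have hft : Tendsto (fun i => f (xs i)) atTop (𝓝 (f x)) :=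
      (hfc x hx).tendsto.comp (tendsto_nhdsWithin_iff.mpr ⟨hxconv, hmem⟩)
    have h2 : ∀ᶠ i in atTop, f (xs i) < f x + e / 2 :=
      hft.eventually (gt_mem_nhds (by linarith))
    have h1 : ∀ᶠ i in atTop, |fs i (xs i) - f (xs i)| ≤ e / 2 := by
      obtain ⟨N, hN⟩ := hunif (e / 2) (by linarith)
      exact eventually_atTop.2 ⟨N, fun i hi => hN i hi (xs i) (hxs i)⟩
    filter_upwards [h1, h2] with i h1 h2
    have := abs_le.1 h1
    linarith [this.2]


/-- Lower semicontinuity of the local slope along uniformly converging `λ`-concave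
functions on converging intervals: `liminf |∂fᵢ|(xᵢ) ≥ |∂f|(x)` whenever `xᵢ → x`. -/
theorem stmt_6 (lam a b : ℝ) (hab : a < b) (f : ℝ → ℝ)
    (hfc : ContinuousOn f (Icc a b))
    (hfconc : ConcaveOn ℝ (Ioo a b) (fun t => f t - lam / 2 * t ^ 2))
    (as bs : ℕ → ℝ) (habs : ∀ i, as i < bs i)
    (ha : Tendsto as atTop (𝓝 a)) (hb : Tendsto bs atTop (𝓝 b))
    (fs : ℕ → ℝ → ℝ) (hfsc : ∀ i, ContinuousOn (fs i) (Icc (as i) (bs i)))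
    (hfsconc : ∀ i, ConcaveOn ℝ (Ioo (as i) (bs i)) (fun t => fs i t - lam / 2 * t ^ 2))
    (hunif : ∀ ε > (0:ℝ), ∃ N, ∀ i ≥ N, ∀ x ∈ Icc (as i) (bs i), |fs i x - f x| ≤ ε)
    (xs : ℕ → ℝ) (hxs : ∀ i, xs i ∈ Icc (as i) (bs i))
    (x : ℝ) (hx : x ∈ Icc a b) (hxconv : Tendsto xs atTop (𝓝 x)) :
    locSlope f (Icc a b) x
      ≤ liminf (fun i => locSlope (fs i) (Icc (as i) (bs i)) (xs i)) atTop := by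
  have hconcIcc : ∀ i, ConcaveOn ℝ (Icc (as i) (bs i)) (fun t => fs i t - lam / 2 * t ^ 2) :=
    fun i => concaveOn_Icc_of_Ioo (habs i) (hfsconc i) (ContinuousOn.sub (hfsc i)
      (Continuous.continuousOn (by fun_prop)))
  have h0 : (0:EReal) ≤ liminf (fun i => locSlope (fs i) (Icc (as i) (bs i)) (xs i)) atTop :=
    le_liminf_of_le (by isBoundedDefault)
      (Eventually.of_forall fun i => locSlope_nonneg (habs i) (hxs i) (fs i))
  by_contra hcon
  push_neg at hcon
  obtain ⟨c, hc1, hc2⟩ := EReal.exists_between_coe_real hcon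
  have hcpos : (0:ℝ) < c := by exact_mod_cast lt_of_le_of_lt h0 hc1
  have key : ∀ e : ℝ, 0 < e →
      ((c - e : ℝ) : EReal) ≤ liminf (fun i => locSlope (fs i) (Icc (as i) (bs i)) (xs i)) atTop := by
    intro e he
    rcases le_or_gt c e with hce | hec
    · refine le_trans ?_ h0
      exact_mod_cast sub_nonpos.mpr hce
    -- main case : 0 < e < c
    haveI := nebot_Icc_diff hab hx
    obtain ⟨δ, hδdef⟩ : ∃ δ : ℝ, δ = e / (2 * (|lam| + 1)) := ⟨_, rfl⟩
    have hδpos : 0 < δ := by rw [hδdef]; positivity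
    have hfreq : ∃ᶠ y in 𝓝[Icc a b \ {x}] x,
        (c : EReal) < ((max (f y - f x) 0 / |y - x| : ℝ) : EReal) :=
      frequently_lt_of_lt_limsup (by isBoundedDefault) hc2
    have hev1 : ∀ᶠ y in 𝓝[Icc a b \ {x}] x, |y - x| < δ := by
      refine Eventually.filter_mono nhdsWithin_le_nhds ?_
      filter_upwards [Metric.ball_mem_nhds x hδpos] with y hy
      simpa [Real.dist_eq] using hy
    obtain ⟨y, hyq, hymem, hyd⟩ :=
      (hfreq.and_eventually (eventually_mem_nhdsWithin.and hev1)).exists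
    have hy' : y ∈ Icc a b := hymem.1
    obtain ⟨m, hmdef⟩ : ∃ m : ℝ, m = |y - x| := ⟨_, rfl⟩
    have hm0 : 0 < m := by
      rw [hmdef]
      exact abs_pos.2 (sub_ne_zero.2 hymem.2)
    have hmδ : m < δ := by rw [hmdef]; exact hyd
    have hq : c < max (f y - f x) 0 / m := by
      rw [hmdef]; exact_mod_cast hyq
    have hyx : c * m < f y - f x := by
      have h1 : c * m < max (f y - f x) 0 := (lt_div_iff₀ hm0).1 hq
      rcases max_cases (f y - f x) 0 with ⟨heq, _⟩ | ⟨heq, _⟩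
      · rwa [heq] at h1
      · rw [heq] at h1; nlinarith
    obtain ⟨s, hsdef⟩ : ∃ s : ℝ, s = e * m / 8 := ⟨_, rfl⟩
    have hs0 : 0 < s := by rw [hsdef]; positivity
    have hs8 : 8 * s = e * m := by rw [hsdef]; ring
    obtain ⟨t0, ht0def⟩ : ∃ t0 : ℝ, t0 = e / (4 * c) := ⟨_, rfl⟩
    have ht00 : 0 < t0 := by rw [ht0def]; positivity
    have ht0c : t0 * c = e / 4 := by
      rw [ht0def]; field_simp [hcpos.ne']
    have ht01 : t0 ≤ 1 := by
      rw [ht0def, div_le_one (by positivity)]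
      linarith
    -- the comparison points
    have hqmem : ∀ i, max (as i) (min y (bs i)) ∈ Icc (as i) (bs i) :=
      fun i => ⟨le_max_left _ _, max_le (habs i).le (min_le_right _ _)⟩
    have hqt : Tendsto (fun i => max (as i) (min y (bs i))) atTop (𝓝 y) := by
      have h1 : Tendsto (fun i => max (as i) (min y (bs i))) atTop
          (𝓝 (max a (min y b))) := ha.max (tendsto_const_nhds.min hb)
      rwa [min_eq_left hy'.2, max_eq_right hy'.1] at h1
    have hqIcc : ∀ᶠ i in atTop, max (as i) (min y (bs i)) ∈ Icc a b := by
      filter_upwards [ha.eventually (gt_mem_nhds hab), hb.eventually (lt_mem_nhds hab)]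
        with i h1 h2
      constructor
      · exact le_trans (le_min hy'.1 h2.le) (le_max_right _ _)
      · exact max_le h1.le (le_trans (min_le_left _ _) hy'.2)
    have hfq : Tendsto (fun i => f (max (as i) (min y (bs i)))) atTop (𝓝 (f y)) :=
      (hfc y hy').tendsto.comp (tendsto_nhdsWithin_iff.mpr ⟨hqt, hqIcc⟩)
    have F1 : ∀ᶠ i in atTop, f y - s ≤ fs i (max (as i) (min y (bs i))) := by
      obtain ⟨N, hN⟩ := hunif (s / 2) (by positivity)
      have h1 : ∀ᶠ i in atTop, |fs i (max (as i) (min y (bs i)))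
          - f (max (as i) (min y (bs i)))| ≤ s / 2 :=
        eventually_atTop.2 ⟨N, fun i hi => hN i hi _ (hqmem i)⟩
      have h2 : ∀ᶠ i in atTop, |f (max (as i) (min y (bs i))) - f y| < s / 2 := by
        obtain ⟨N2, hN2⟩ := Metric.tendsto_atTop.1 hfq (s / 2) (by positivity)
        exact eventually_atTop.2 ⟨N2, fun i hi => by
          have := hN2 i hi; rwa [Real.dist_eq] at this⟩
      filter_upwards [h1, h2] with i h1 h2
      have h1' := abs_le.1 h1
      have h2' := abs_lt.1 h2
      linarith [h1'.1, h2'.1]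
    have F2 : ∀ᶠ i in atTop, fs i (xs i) ≤ f x + s :=
      aux_ub lam a b hab f hfc as bs ha hb fs hconcIcc hunif xs hxs x hx hxconv s hs0
    have F3 : ∀ᶠ i in atTop, m / 2 ≤ |max (as i) (min y (bs i)) - xs i|
        ∧ |max (as i) (min y (bs i)) - xs i| ≤ m + t0 * m := by
      have hdt : Tendsto (fun i => |max (as i) (min y (bs i)) - xs i|) atTop (𝓝 m) := by
        rw [hmdef]
        exact (hqt.sub hxconv).abs
      obtain ⟨N3, hN3⟩ := Metric.tendsto_atTop.1 hdt (min (m / 2) (t0 * m)) (by positivity)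
      refine eventually_atTop.2 ⟨N3, fun i hi => ?_⟩
      have := hN3 i hi
      rw [Real.dist_eq] at this
      have h := abs_lt.1 this
      have hmin1 : min (m / 2) (t0 * m) ≤ m / 2 := min_le_left _ _
      have hmin2 : min (m / 2) (t0 * m) ≤ t0 * m := min_le_right _ _
      constructor <;> linarith [h.1, h.2]
    refine le_liminf_of_le (by isBoundedDefault) ?_
    filter_upwards [F1, F2, F3] with i h1 h2 h3
    have hD0 : 0 < |max (as i) (min y (bs i)) - xs i| := by linarith [h3.1]
    have hne : xs i ≠ max (as i) (min y (bs i)) := by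
      intro hEq
      rw [hEq, sub_self, abs_zero] at hD0
      exact lt_irrefl _ hD0
    have hsl := slope_lower lam (fs i) (hconcIcc i) (hxs i) (hqmem i) hne
    refine le_trans ?_ hsl
    rw [EReal.coe_le_coe_iff]
    -- real arithmetic
    have hN : m * (c - e / 4) ≤ fs i (max (as i) (min y (bs i))) - fs i (xs i) := by
      linarith [hyx, h1, h2, hs8]
    have hNnonneg : 0 ≤ m * (c - e / 4) := by
      have := mul_pos hm0 (show (0:ℝ) < c - e / 4 by linarith)
      linarith
    have hq1 : m * (c - e / 4) / (m * (1 + t0))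
        ≤ (fs i (max (as i) (min y (bs i))) - fs i (xs i)) / |max (as i) (min y (bs i)) - xs i| := by
      refine div_le_div₀ (by linarith [hN, hNnonneg]) hN hD0 ?_
      have : m + t0 * m = m * (1 + t0) := by ring
      linarith [h3.2]
    have hq2 : m * (c - e / 4) / (m * (1 + t0)) = (c - e / 4) / (1 + t0) :=
      mul_div_mul_left _ _ hm0.ne'
    have hq3 : c - e / 2 ≤ (c - e / 4) / (1 + t0) := by
      rw [le_div_iff₀ (by linarith : (0:ℝ) < 1 + t0)]
      have het0 : 0 ≤ e * t0 := by positivity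
      linarith [ht0c, het0]
    have hD2m : |max (as i) (min y (bs i)) - xs i| ≤ 2 * m := by
      have h5 : t0 * m ≤ 1 * m := mul_le_mul_of_nonneg_right ht01 hm0.le
      rw [one_mul] at h5
      linarith [h3.2]
    have hlam : |lam| / 2 * |max (as i) (min y (bs i)) - xs i| ≤ e / 2 := by
      have hl0 : 0 ≤ |lam| := abs_nonneg lam
      have h2δ : |max (as i) (min y (bs i)) - xs i| ≤ 2 * δ := by linarith
      have : |lam| / 2 * |max (as i) (min y (bs i)) - xs i| ≤ |lam| / 2 * (2 * δ) :=
        mul_le_mul_of_nonneg_left h2δ (by positivity)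
      have hδe : 2 * (|lam| + 1) * δ = e := by
        have hne : |lam| + 1 ≠ 0 := by positivity
        rw [hδdef]; field_simp
      linarith [this, hδe, hδpos]
    linarith [hq1, hq2.symm.le, hq3, hlam]
  have hcle : (c : EReal) ≤ liminf (fun i => locSlope (fs i) (Icc (as i) (bs i)) (xs i)) atTop := by
    by_contra h2
    push_neg at h2
    obtain ⟨d, hd1, hd2⟩ := EReal.exists_between_coe_real h2
    have hed : (0:ℝ) < c - d := by
      have := EReal.coe_lt_coe_iff.1 hd2
      linarith
    have hkey := key (c - d) hed
    rw [show c - (c - d) = d from by ring] at hkey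
    exact absurd (lt_of_le_of_lt hkey hd1) (lt_irrefl _)
  exact absurd (lt_of_le_of_lt hcle hc1) (lt_irrefl _)
end

section
/- Let f : [a,b] → (0,∞) be C² with f'' + K f ≤ 0 on (a,b) for some K ∈ ℝ, with K such that b − a < π/√K when K > 0. Then u = log f satisfies the Riccati inequality u'' + (u')² + K ≤ 0, and consequently |u'(t)| = |(log f)'(t)| ≤ max{ cot_K(t − a), cot_K(b − t) } for t ∈ (a,b), where cot_K denotes the generalized cotangent sn_K'/sn_K with sn_K the solution of v'' + K v = 0, v(0)=0, v'(0)=1. -/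
open Set

/-- `sn_K`: the solution of `v'' + Kv = 0`, `v(0) = 0`, `v'(0) = 1`. -/
noncomputable def snK (K t : ℝ) : ℝ :=
  if 0 < K then Real.sin (Real.sqrt K * t) / Real.sqrt K
  else if K = 0 then t
  else Real.sinh (Real.sqrt (-K) * t) / Real.sqrt (-K)

/-- The derivative `sn_K'`. -/
noncomputable def csK (K t : ℝ) : ℝ :=
  if 0 < K then Real.cos (Real.sqrt K * t)
  else if K = 0 then 1
  else Real.cosh (Real.sqrt (-K) * t)

/-- The generalized cotangent `cot_K = sn_K'/sn_K`. -/
noncomputable def cotK (K t : ℝ) : ℝ := csK K t / snK K t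

lemma snK_zero (K : ℝ) : snK K 0 = 0 := by
  unfold snK; split_ifs <;> simp

lemma hasDerivAt_snK (K t : ℝ) : HasDerivAt (snK K) (csK K t) t := by
  show HasDerivAt (fun s => snK K s) (csK K t) t
  rcases lt_trichotomy 0 K with hK | hK | hK
  · have hs : (0:ℝ) < Real.sqrt K := Real.sqrt_pos.mpr hK
    simp only [snK, csK, if_pos hK]
    have h1 : HasDerivAt (fun t : ℝ => Real.sin (Real.sqrt K * t))
        (Real.cos (Real.sqrt K * t) * (Real.sqrt K * 1)) t :=
      (Real.hasDerivAt_sin _).comp t ((hasDerivAt_id t).const_mul _)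
    have h2 := h1.div_const (Real.sqrt K)
    refine h2.congr_deriv ?_
    field_simp [hs.ne']
  · subst hK
    simp only [snK, csK, if_neg (lt_irrefl (0:ℝ)), if_pos rfl]
    exact hasDerivAt_id' t
  · have hK' : ¬ (0 < K) := by linarith
    have hs : (0:ℝ) < Real.sqrt (-K) := Real.sqrt_pos.mpr (by linarith)
    simp only [snK, csK, if_neg hK', if_neg (by linarith : K ≠ 0)]
    have h1 : HasDerivAt (fun t : ℝ => Real.sinh (Real.sqrt (-K) * t))
        (Real.cosh (Real.sqrt (-K) * t) * (Real.sqrt (-K) * 1)) t :=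
      (Real.hasDerivAt_sinh _).comp t ((hasDerivAt_id t).const_mul _)
    have h2 := h1.div_const (Real.sqrt (-K))
    refine h2.congr_deriv ?_
    field_simp [hs.ne']

lemma hasDerivAt_csK (K t : ℝ) : HasDerivAt (csK K) (-(K * snK K t)) t := by
  show HasDerivAt (fun s => csK K s) (-(K * snK K t)) t
  rcases lt_trichotomy 0 K with hK | hK | hK
  · have hs : (0:ℝ) < Real.sqrt K := Real.sqrt_pos.mpr hK
    have hsq : Real.sqrt K * Real.sqrt K = K := Real.mul_self_sqrt hK.le
    simp only [snK, csK, if_pos hK]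
    have h1 : HasDerivAt (fun t : ℝ => Real.cos (Real.sqrt K * t))
        (-Real.sin (Real.sqrt K * t) * (Real.sqrt K * 1)) t :=
      (Real.hasDerivAt_cos _).comp t ((hasDerivAt_id t).const_mul _)
    convert h1 using 1
    field_simp [hs.ne']
    linear_combination (Real.sin (Real.sqrt K * t)) * hsq
  · subst hK
    simp only [snK, csK, if_neg (lt_irrefl (0:ℝ)), if_pos rfl]
    simpa using hasDerivAt_const t (1:ℝ)
  · have hK' : ¬ (0 < K) := by linarith
    have hs : (0:ℝ) < Real.sqrt (-K) := Real.sqrt_pos.mpr (by linarith)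
    have hsq : Real.sqrt (-K) * Real.sqrt (-K) = -K := Real.mul_self_sqrt (by linarith)
    simp only [snK, csK, if_neg hK', if_neg (by linarith : K ≠ 0)]
    have h1 : HasDerivAt (fun t : ℝ => Real.cosh (Real.sqrt (-K) * t))
        (Real.sinh (Real.sqrt (-K) * t) * (Real.sqrt (-K) * 1)) t :=
      (Real.hasDerivAt_cosh _).comp t ((hasDerivAt_id t).const_mul _)
    convert h1 using 1
    field_simp [hs.ne']
    linear_combination (-Real.sinh (Real.sqrt (-K) * t)) * hsq

lemma snK_pos {K L : ℝ} (hKL : 0 < K → L ≤ Real.pi / Real.sqrt K) {s : ℝ}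
    (hs : 0 < s) (hsL : s < L) : 0 < snK K s := by
  rcases lt_trichotomy 0 K with hK | hK | hK
  · have hsq : (0:ℝ) < Real.sqrt K := Real.sqrt_pos.mpr hK
    simp only [snK, if_pos hK]
    apply div_pos _ hsq
    apply Real.sin_pos_of_pos_of_lt_pi (by positivity)
    have h2 : Real.sqrt K * s < Real.sqrt K * (Real.pi / Real.sqrt K) :=
      mul_lt_mul_of_pos_left (lt_of_lt_of_le hsL (hKL hK)) hsq
    rwa [mul_div_cancel₀ _ hsq.ne'] at h2
  · subst hK
    simp only [snK, if_neg (lt_irrefl (0:ℝ)), if_pos rfl]; exact hs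
  · have hK' : ¬ (0 < K) := by linarith
    have hsq : (0:ℝ) < Real.sqrt (-K) := Real.sqrt_pos.mpr (by linarith)
    simp only [snK, if_neg hK', if_neg (by linarith : K ≠ 0)]
    exact div_pos (Real.sinh_pos_iff.mpr (by positivity)) hsq

lemma key_lemma (K a b : ℝ) (hab : a < b)
    (hK : 0 < K → b - a < Real.pi / Real.sqrt K)
    (f : ℝ → ℝ) (hf : ContDiffOn ℝ 2 f (Ioo a b))
    (hfc : ContinuousOn f (Icc a b)) (hfpos : ∀ t ∈ Icc a b, 0 < f t)
    (hFK : ∀ t ∈ Ioo a b, deriv (deriv f) t + K * f t ≤ 0) :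
    ∀ t ∈ Ioo a b, deriv f t * snK K (t - a) ≤ f t * csK K (t - a) := by
  have hop : IsOpen (Ioo a b) := isOpen_Ioo
  have hfd : ∀ s ∈ Ioo a b, HasDerivAt f (deriv f s) s := fun s hs =>
    ((hf.differentiableOn (by norm_num) s hs).differentiableAt (hop.mem_nhds hs)).hasDerivAt
  have hf1 : ContDiffOn ℝ 1 (deriv f) (Ioo a b) :=
    hf.deriv_of_isOpen hop (by norm_num)
  have hfd2 : ∀ s ∈ Ioo a b, HasDerivAt (deriv f) (deriv (deriv f) s) s := fun s hs =>
    ((hf1.differentiableOn one_ne_zero s hs).differentiableAt (hop.mem_nhds hs)).hasDerivAt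
  have hfpos' : ∀ s ∈ Ioo a b, 0 < f s := fun s hs => hfpos s (Ioo_subset_Icc_self hs)
  have hsnpos : ∀ s ∈ Ioo a b, 0 < snK K (s - a) := fun s hs =>
    snK_pos (fun h => (hK h).le) (by linarith [hs.1]) (by linarith [hs.2] : s - a < b - a)
  set h : ℝ → ℝ := fun s => deriv f s * snK K (s - a) - f s * csK K (s - a) with hh
  have hsn' : ∀ s : ℝ, HasDerivAt (fun s => snK K (s - a)) (csK K (s - a)) s := fun s => by
    simpa [Function.comp_def] using (hasDerivAt_snK K (s - a)).comp s ((hasDerivAt_id s).sub_const a)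
  have hcs' : ∀ s : ℝ, HasDerivAt (fun s => csK K (s - a)) (-(K * snK K (s - a))) s := fun s => by
    simpa [Function.comp_def] using (hasDerivAt_csK K (s - a)).comp s ((hasDerivAt_id s).sub_const a)
  have hhd : ∀ s ∈ Ioo a b, HasDerivAt h ((deriv (deriv f) s + K * f s) * snK K (s - a)) s := by
    intro s hs
    have := ((hfd2 s hs).mul (hsn' s)).sub ((hfd s hs).mul (hcs' s))
    refine this.congr_deriv ?_
    ring
  have hanti : AntitoneOn h (Ioo a b) := by
    apply antitoneOn_of_deriv_nonpos (convex_Ioo a b)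
    · exact fun s hs => ((hhd s hs).continuousAt.continuousWithinAt)
    · intro s hs
      rw [interior_Ioo] at hs
      exact (hhd s hs).differentiableAt.differentiableWithinAt
    · intro s hs
      rw [interior_Ioo] at hs
      rw [(hhd s hs).deriv]
      exact mul_nonpos_of_nonpos_of_nonneg (hFK s hs) (hsnpos s hs).le
  intro t ht
  by_contra hcon
  push_neg at hcon
  have hht : 0 < h t := by simp only [hh]; linarith
  set ψ : ℝ → ℝ := fun s => Real.log (f s) - Real.log (snK K (s - a)) with hψ
  have hsub : Ioc a t ⊆ Ioo a b := fun s hs => ⟨hs.1, lt_of_le_of_lt hs.2 ht.2⟩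
  have hψd : ∀ s ∈ Ioo a t, HasDerivAt ψ (deriv f s / f s - csK K (s - a) / snK K (s - a)) s := by
    intro s hs
    have hs' : s ∈ Ioo a b := ⟨hs.1, hs.2.trans ht.2⟩
    exact ((hfd s hs').log (hfpos' s hs').ne').sub ((hsn' s).log (hsnpos s hs').ne')
  have hψmono : MonotoneOn ψ (Ioc a t) := by
    apply monotoneOn_of_deriv_nonneg (convex_Ioc a t)
    · apply ContinuousOn.sub
      · exact (hfc.mono (hsub.trans Ioo_subset_Icc_self)).log
          (fun s hs => (hfpos' s (hsub hs)).ne')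
      · apply ContinuousOn.log
        · exact fun s hs => ((hsn' s).continuousAt.continuousWithinAt)
        · exact fun s hs => (hsnpos s (hsub hs)).ne'
    · intro s hs; rw [interior_Ioc] at hs
      exact (hψd s hs).differentiableAt.differentiableWithinAt
    · intro s hs; rw [interior_Ioc] at hs
      rw [(hψd s hs).deriv]
      have hs' : s ∈ Ioo a b := ⟨hs.1, hs.2.trans ht.2⟩
      have h1 : h t ≤ h s := hanti hs' ht hs.2.le
      have h2 : 0 < h s := lt_of_lt_of_le hht h1
      rw [sub_nonneg, div_le_div_iff₀ (hsnpos s hs') (hfpos' s hs')]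
      simp only [hh] at h2
      nlinarith
  obtain ⟨x₀, hx₀, hmin'⟩ := isCompact_Icc.exists_isMinOn (nonempty_Icc.mpr hab.le) hfc
  have hmin : ∀ s ∈ Icc a b, f x₀ ≤ f s := fun s hs => hmin' hs
  have hmpos : 0 < f x₀ := hfpos x₀ hx₀
  set ε := f x₀ * Real.exp (-(ψ t)) with hε
  have hεpos : 0 < ε := by positivity
  have hcont : Filter.Tendsto (fun s => snK K (s - a)) (nhds a) (nhds 0) := by
    have h0 := (hsn' a).continuousAt
    have := h0.tendsto
    simpa [snK_zero] using this
  have hev1 : ∀ᶠ s in nhdsWithin a (Ioi a), snK K (s - a) < ε :=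
    (hcont.mono_left nhdsWithin_le_nhds).eventually (gt_mem_nhds hεpos)
  have hev2 : ∀ᶠ s in nhdsWithin a (Ioi a), s ∈ Ioc a t :=
    Filter.eventually_of_mem (Ioc_mem_nhdsGT_of_mem ⟨le_rfl, ht.1⟩) (fun s hs => hs)
  obtain ⟨s, hs1, hs2⟩ := (hev1.and hev2).exists
  have hsIoo : s ∈ Ioo a b := hsub hs2
  have hψs : ψ s ≤ ψ t := hψmono hs2 ⟨ht.1, le_rfl⟩ hs2.2
  have hfm : f x₀ ≤ f s := hmin s (Ioo_subset_Icc_self hsIoo)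
  have hlog1 : Real.log (f x₀) ≤ Real.log (f s) := Real.log_le_log hmpos hfm
  have hlog2 : Real.log (snK K (s - a)) < Real.log ε := Real.log_lt_log (hsnpos s hsIoo) hs1
  have hlogε : Real.log ε = Real.log (f x₀) + (-(ψ t)) := by
    rw [hε, Real.log_mul hmpos.ne' (Real.exp_ne_zero _), Real.log_exp]
  have hψs' : Real.log (f s) - Real.log (snK K (s - a)) ≤ ψ t := hψs
  linarith

/-- If `f : [a,b] → (0,∞)` is `C²` with `f'' + Kf ≤ 0` on `(a,b)` (and `b − a < π/√K`
when `K > 0`), then `u = log f` satisfies the Riccati inequality `u'' + (u')² + K ≤ 0`,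
and `|u'(t)| ≤ max{cot_K(t−a), cot_K(b−t)}` on `(a,b)`. -/
theorem stmt_8 (K a b : ℝ) (hab : a < b)
    (hK : 0 < K → b - a < Real.pi / Real.sqrt K)
    (f : ℝ → ℝ) (hf : ContDiffOn ℝ 2 f (Ioo a b))
    (hfc : ContinuousOn f (Icc a b)) (hfpos : ∀ t ∈ Icc a b, 0 < f t)
    (hFK : ∀ t ∈ Ioo a b, deriv (deriv f) t + K * f t ≤ 0) :
    ∀ t ∈ Ioo a b,
      (deriv (deriv (fun s => Real.log (f s))) t
          + (deriv (fun s => Real.log (f s)) t) ^ 2 + K ≤ 0) ∧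
      |deriv (fun s => Real.log (f s)) t| ≤ max (cotK K (t - a)) (cotK K (b - t)) := by
  have hop : IsOpen (Ioo a b) := isOpen_Ioo
  have hfd : ∀ s ∈ Ioo a b, HasDerivAt f (deriv f s) s := fun s hs =>
    ((hf.differentiableOn (by norm_num) s hs).differentiableAt (hop.mem_nhds hs)).hasDerivAt
  have hf1 : ContDiffOn ℝ 1 (deriv f) (Ioo a b) :=
    hf.deriv_of_isOpen hop (by norm_num)
  have hfd2 : ∀ s ∈ Ioo a b, HasDerivAt (deriv f) (deriv (deriv f) s) s := fun s hs =>
    ((hf1.differentiableOn one_ne_zero s hs).differentiableAt (hop.mem_nhds hs)).hasDerivAt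
  have hfpos' : ∀ s ∈ Ioo a b, 0 < f s := fun s hs => hfpos s (Ioo_subset_Icc_self hs)
  -- reflected function
  set L : ℝ → ℝ := fun s => a + b - s with hLdef
  have hLmapo : MapsTo L (Ioo a b) (Ioo a b) := fun s hs => by
    constructor <;> simp only [hLdef] <;> [linarith [hs.2]; linarith [hs.1]]
  have hLmapc : MapsTo L (Icc a b) (Icc a b) := fun s hs => by
    constructor <;> simp only [hLdef] <;> [linarith [hs.2]; linarith [hs.1]]
  have hLd : ∀ s : ℝ, HasDerivAt L (-1) s := fun s => by
    simpa using (hasDerivAt_id s).const_sub (a + b)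
  have hLcont : Continuous L := by fun_prop
  set g : ℝ → ℝ := fun s => f (L s) with hgdef
  have hgc : ContinuousOn g (Icc a b) := hfc.comp hLcont.continuousOn hLmapc
  have hgcd : ContDiffOn ℝ 2 g (Ioo a b) :=
    hf.comp ((contDiff_const.sub contDiff_id).contDiffOn) hLmapo
  have hgpos : ∀ s ∈ Icc a b, 0 < g s := fun s hs => hfpos (L s) (hLmapc hs)
  have hgd : ∀ s ∈ Ioo a b, HasDerivAt g (-(deriv f (L s))) s := fun s hs => by
    simpa [Function.comp_def] using ((hfd (L s) (hLmapo hs)).comp s (hLd s))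
  have hgderiv : ∀ s ∈ Ioo a b, deriv g s = -(deriv f (L s)) := fun s hs => (hgd s hs).deriv
  have hgd2 : ∀ s ∈ Ioo a b, deriv (deriv g) s = deriv (deriv f) (L s) := by
    intro s hs
    have heq : deriv g =ᶠ[nhds s] fun x => -(deriv f (L x)) :=
      Filter.eventually_of_mem (hop.mem_nhds hs) (fun x hx => hgderiv x hx)
    have h2 : HasDerivAt (fun x => -(deriv f (L x))) (deriv (deriv f) (L s)) s := by
      simpa [Function.comp_def, Pi.neg_def] using (((hfd2 (L s) (hLmapo hs)).comp s (hLd s))).neg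
    rw [heq.deriv_eq, h2.deriv]
  have hgFK : ∀ s ∈ Ioo a b, deriv (deriv g) s + K * g s ≤ 0 := fun s hs => by
    rw [hgd2 s hs]
    exact hFK (L s) (hLmapo hs)
  have hkeyf := key_lemma K a b hab hK f hf hfc hfpos hFK
  have hkeyg := key_lemma K a b hab hK g hgcd hgc hgpos hgFK
  intro t ht
  have hfpt : 0 < f t := hfpos' t ht
  have hsnpos1 : 0 < snK K (t - a) :=
    snK_pos (fun h => (hK h).le) (by linarith [ht.1]) (by linarith [ht.2] : t - a < b - a)
  have hsnpos2 : 0 < snK K (b - t) :=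
    snK_pos (fun h => (hK h).le) (by linarith [ht.2]) (by linarith [ht.1] : b - t < b - a)
  -- derivative of log f
  have hlogd : ∀ s ∈ Ioo a b, HasDerivAt (fun x => Real.log (f x)) (deriv f s / f s) s :=
    fun s hs => (hfd s hs).log (hfpos' s hs).ne'
  have hd1 : deriv (fun s => Real.log (f s)) t = deriv f t / f t := (hlogd t ht).deriv
  constructor
  · -- Riccati
    have heq : deriv (fun s => Real.log (f s)) =ᶠ[nhds t] fun s => deriv f s / f s :=
      Filter.eventually_of_mem (hop.mem_nhds ht) (fun s hs => (hlogd s hs).deriv)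
    have hq : HasDerivAt (fun s => deriv f s / f s)
        ((deriv (deriv f) t * f t - deriv f t * deriv f t) / (f t) ^ 2) t :=
      (hfd2 t ht).div (hfd t ht) hfpt.ne'
    rw [heq.deriv_eq, hq.deriv, hd1]
    have hfk := hFK t ht
    have e : (deriv (deriv f) t * f t - deriv f t * deriv f t) / (f t) ^ 2
        + (deriv f t / f t) ^ 2 + K = (deriv (deriv f) t + K * f t) / f t := by
      field_simp
      ring
    rw [e]
    exact div_nonpos_of_nonpos_of_nonneg hfk hfpt.le
  · rw [hd1]
    -- upper bound
    have hub : deriv f t / f t ≤ cotK K (t - a) := by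
      rw [cotK, div_le_div_iff₀ hfpt hsnpos1]
      have := hkeyf t ht
      linarith
    -- lower bound via reflection at L t
    have hLt : L t ∈ Ioo a b := hLmapo ht
    have hg := hkeyg (L t) hLt
    have hLL : L (L t) = t := by simp [hLdef]
    have hLa : L t - a = b - t := by simp [hLdef]; ring
    rw [hgderiv (L t) hLt, hLL, hLa] at hg
    have hgval : g (L t) = f t := by show f (L (L t)) = f t; rw [hLL]
    rw [hgval] at hg
    -- hg : -(deriv f t) * snK K (b - t) ≤ f t * csK K (b - t)
    have hlb : -(cotK K (b - t)) ≤ deriv f t / f t := by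
      rw [cotK, ← neg_div, div_le_div_iff₀ hsnpos2 hfpt]
      nlinarith
    rw [abs_le]
    constructor
    · calc -(max (cotK K (t - a)) (cotK K (b - t))) ≤ -(cotK K (b - t)) := by
            exact neg_le_neg (le_max_right _ _)
        _ ≤ deriv f t / f t := hlb
    · exact le_trans hub (le_max_left _ _)
end

section
/- Let f : I → (0,∞) be continuous on a compact interval Ī and FK-concave on the interior (f'' + Kf ≤ 0 in the comparison sense). Then the function G(x) = K f(x)² + |∂f|(x)² is lower semicontinuous on Ī, and hence G attains its minimum on Ī. -/
set_option maxHeartbeats 1000000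


open Set Filter Topology

/-- The distortion coefficient `σ_K^(λ)(θ) = sn_K(λθ)/sn_K(θ)`. -/
noncomputable def sigmaK (K lam θ : ℝ) : ℝ := snK K (lam * θ) / snK K θ

/-- `FK`-concavity (`f'' + Kf ≤ 0`) in the comparison sense on the interior of `[a,b]`. -/
def FKConcaveOn (K a b : ℝ) (f : ℝ → ℝ) : Prop :=
  ∀ s ∈ Set.Ioo a b, ∀ t ∈ Set.Ioo a b, s < t →
    (0 < K → t - s < Real.pi / Real.sqrt K) →
    ∀ lam ∈ Set.Icc (0:ℝ) 1,
      sigmaK K (1 - lam) (t - s) * f s + sigmaK K lam (t - s) * f t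
        ≤ f ((1 - lam) * s + lam * t)

/-- Squaring is monotone from reals into `EReal` products. -/
lemma er_sq (q : ℝ) (hq : 0 ≤ q) (s : EReal) (h : (q:EReal) ≤ s) :
    ((q*q : ℝ) : EReal) ≤ s*s := by
  induction s using EReal.rec with
  | bot => simp at h
  | coe x =>
    have hq' : q ≤ x := by exact_mod_cast h
    rw [EReal.coe_mul]
    exact_mod_cast mul_le_mul hq' hq' hq (le_trans hq hq')
  | top => simp [EReal.top_mul_top]

lemma er_sq_nonneg (s : EReal) (h : (0:EReal) ≤ s) : (0:EReal) ≤ s * s := by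
  have := er_sq 0 le_rfl s (by simpa using h)
  simpa using this

/-- The key `sinh` comparison inequality, proved via concavity in the parameter. -/
lemma sinh_lower (u : ℝ) (hu : 0 ≤ u) : ∀ l ∈ Icc (0:ℝ) 1,
    (l - l*(1-l)*u^2) * Real.sinh u ≤ Real.sinh (l*u) := by
  have hs0 : 0 ≤ Real.sinh u := Real.sinh_nonneg_iff.mpr hu
  set F : ℝ → ℝ := fun l => Real.sinh (l*u) - l*Real.sinh u + (l - l^2)*(u^2*Real.sinh u) with hF
  have hmul : ∀ l : ℝ, HasDerivAt (fun l : ℝ => l*u) u l := by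
    intro l; simpa using (hasDerivAt_id l).mul_const u
  have hd1 : ∀ l : ℝ, HasDerivAt F
      (Real.cosh (l*u)*u - Real.sinh u + (1 - 2*l)*(u^2*Real.sinh u)) l := by
    intro l
    have h1 : HasDerivAt (fun l : ℝ => Real.sinh (l*u)) (Real.cosh (l*u)*u) l := by
      have := (Real.hasDerivAt_sinh (l*u)).comp l (hmul l); exact this
    have h2 : HasDerivAt (fun l : ℝ => l*Real.sinh u) (Real.sinh u) l := by
      simpa using (hasDerivAt_id l).mul_const (Real.sinh u)
    have h3 : HasDerivAt (fun l : ℝ => (l - l^2)*(u^2*Real.sinh u))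
        ((1 - 2*l)*(u^2*Real.sinh u)) l := by
      have := ((hasDerivAt_id l).sub (hasDerivAt_pow 2 l)).mul_const (u^2*Real.sinh u)
      simpa using this
    exact (h1.sub h2).add h3
  have hd2 : ∀ l : ℝ, HasDerivAt
      (fun l => Real.cosh (l*u)*u - Real.sinh u + (1 - 2*l)*(u^2*Real.sinh u))
      (Real.sinh (l*u)*u*u - 2*(u^2*Real.sinh u)) l := by
    intro l
    have h1 : HasDerivAt (fun l : ℝ => Real.cosh (l*u)*u) (Real.sinh (l*u)*u*u) l := by
      have := ((Real.hasDerivAt_cosh (l*u)).comp l (hmul l)).mul_const u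
      simpa using this
    have h3 : HasDerivAt (fun l : ℝ => (1 - 2*l)*(u^2*Real.sinh u)) (-2*(u^2*Real.sinh u)) l := by
      have := ((hasDerivAt_const l (1:ℝ)).sub ((hasDerivAt_id l).const_mul 2)).mul_const
        (u^2*Real.sinh u)
      simpa using this
    have := (h1.sub (hasDerivAt_const l (Real.sinh u))).add h3
    refine this.congr_deriv ?_
    ring
  have hderiv : deriv F = fun l => Real.cosh (l*u)*u - Real.sinh u + (1 - 2*l)*(u^2*Real.sinh u) :=
    funext fun l => (hd1 l).deriv
  have hconc : ConcaveOn ℝ (Icc 0 1) F := by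
    apply concaveOn_of_deriv2_nonpos (convex_Icc 0 1)
    · exact Continuous.continuousOn (by fun_prop)
    · intro l _; exact (hd1 l).differentiableAt.differentiableWithinAt
    · intro l _; rw [hderiv]; exact (hd2 l).differentiableAt.differentiableWithinAt
    · intro l hl
      have hit : deriv^[2] F l = Real.sinh (l*u)*u*u - 2*(u^2*Real.sinh u) := by
        simp only [Function.iterate_succ, Function.iterate_zero, Function.comp_apply, id]
        rw [hderiv]
        exact (hd2 l).deriv
      rw [hit]
      have hl' : l ∈ Ioo (0:ℝ) 1 := by rwa [interior_Icc] at hl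
      have h1 : Real.sinh (l*u) ≤ Real.sinh u := by
        apply Real.sinh_le_sinh.mpr
        nlinarith [hl'.1.le, hl'.2.le]
      nlinarith [sq_nonneg u, mul_nonneg (mul_nonneg hs0 hu) hu]
  intro l hl
  have h0 : F 0 = 0 := by simp [hF]
  have h1 : F 1 = 0 := by simp [hF]
  have key := hconc.2 (by simp : (0:ℝ) ∈ Icc (0:ℝ) 1) (by simp : (1:ℝ) ∈ Icc (0:ℝ) 1)
    (by linarith [hl.2] : 0 ≤ 1 - l) hl.1 (by ring : (1-l) + l = 1)
  simp only [smul_eq_mul, mul_zero, mul_one, h0, h1] at key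
  have h2 : 0 ≤ F l := by simpa using key
  have h3 : 0 ≤ Real.sinh (l*u) - l*Real.sinh u + (l - l^2)*(u^2*Real.sinh u) := h2
  nlinarith [h3]

/-- Lower bound on the distortion coefficients. -/
lemma sigma_lower (K θ : ℝ) (hθ : 0 < θ) (hKθ : 0 < K → Real.sqrt K * θ < Real.pi) :
    ∀ l ∈ Icc (0:ℝ) 1, l - l*(1-l)*(max (-K) 0)*θ^2 ≤ sigmaK K l θ := by
  intro l hl
  rcases lt_trichotomy K 0 with hK | hK | hK
  · have hnK : (0:ℝ) < -K := by linarith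
    have hsq : Real.sqrt (-K) > 0 := Real.sqrt_pos.mpr hnK
    have hu : 0 < Real.sqrt (-K) * θ := mul_pos hsq hθ
    have hmax : max (-K) 0 = -K := max_eq_left hnK.le
    have hσ : sigmaK K l θ
        = Real.sinh (l * (Real.sqrt (-K) * θ)) / Real.sinh (Real.sqrt (-K) * θ) := by
      have harg : Real.sqrt (-K) * (l * θ) = l * (Real.sqrt (-K) * θ) := by ring
      rw [sigmaK, snK, snK, if_neg (by linarith : ¬ (0:ℝ) < K), if_neg hK.ne,
        if_neg (by linarith : ¬ (0:ℝ) < K), if_neg hK.ne, harg,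
        div_div_div_cancel_right₀ hsq.ne']
    have hs : 0 < Real.sinh (Real.sqrt (-K) * θ) := Real.sinh_pos_iff.mpr hu
    rw [hσ, le_div_iff₀ hs, hmax]
    have hsl := sinh_lower (Real.sqrt (-K) * θ) hu.le l hl
    have husq : (Real.sqrt (-K) * θ)^2 = (-K) * θ^2 := by
      rw [mul_pow, Real.sq_sqrt hnK.le]
    calc (l - l*(1-l)*(-K)*θ^2) * Real.sinh (Real.sqrt (-K) * θ)
        = (l - l*(1-l)*(Real.sqrt (-K)*θ)^2) * Real.sinh (Real.sqrt (-K) * θ) := by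
          rw [husq]; ring
      _ ≤ Real.sinh (l * (Real.sqrt (-K) * θ)) := hsl
  · subst hK
    have hσ : sigmaK 0 l θ = l := by
      rw [sigmaK, snK, snK, if_neg (lt_irrefl 0), if_pos rfl, if_neg (lt_irrefl 0), if_pos rfl]
      field_simp
    rw [hσ]
    simp
  · have hsq : Real.sqrt K > 0 := Real.sqrt_pos.mpr hK
    have hu : 0 < Real.sqrt K * θ := mul_pos hsq hθ
    have hmax : max (-K) 0 = 0 := max_eq_right (by linarith)
    have hσ : sigmaK K l θ = Real.sin (l * (Real.sqrt K * θ)) / Real.sin (Real.sqrt K * θ) := by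
      have harg : Real.sqrt K * (l * θ) = l * (Real.sqrt K * θ) := by ring
      rw [sigmaK, snK, snK, if_pos hK, if_pos hK, harg, div_div_div_cancel_right₀ hsq.ne']
    have hs : 0 < Real.sin (Real.sqrt K * θ) := Real.sin_pos_of_pos_of_lt_pi hu (hKθ hK)
    rw [hσ, hmax, le_div_iff₀ hs]
    have hconc := (strictConcaveOn_sin_Icc).concaveOn
    have hmem0 : (0:ℝ) ∈ Icc 0 Real.pi := by simp [Real.pi_pos.le]
    have hmemu : Real.sqrt K * θ ∈ Icc 0 Real.pi := ⟨hu.le, (hKθ hK).le⟩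
    have key := hconc.2 hmem0 hmemu (by linarith [hl.2] : 0 ≤ 1 - l) hl.1 (by ring)
    simp only [smul_eq_mul, mul_zero, Real.sin_zero, zero_add] at key
    calc (l - l*(1-l)*0*θ^2) * Real.sin (Real.sqrt K * θ)
        = l * Real.sin (Real.sqrt K * θ) := by ring
      _ ≤ Real.sin (l * (Real.sqrt K * θ)) := key

/-- For a continuous positive `FK`-concave function `f` on a compact interval, the
function `G = K f² + |∂f|²` is lower semicontinuous, hence attains its minimum. -/
theorem stmt_10 (K a b : ℝ) (hab : a < b) (f : ℝ → ℝ)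
    (hfc : ContinuousOn f (Icc a b)) (hfpos : ∀ t ∈ Icc a b, 0 < f t)
    (hFK : FKConcaveOn K a b f) :
    LowerSemicontinuousOn
      (fun x => ((K * (f x) ^ 2 : ℝ) : EReal)
        + locSlope f (Icc a b) x * locSlope f (Icc a b) x) (Icc a b) ∧
    ∃ z ∈ Icc a b, ∀ x ∈ Icc a b,
      ((K * (f z) ^ 2 : ℝ) : EReal) + locSlope f (Icc a b) z * locSlope f (Icc a b) z
        ≤ ((K * (f x) ^ 2 : ℝ) : EReal)
          + locSlope f (Icc a b) x * locSlope f (Icc a b) x := by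
  set F : ℝ → EReal := fun x => ((K * (f x) ^ 2 : ℝ) : EReal)
    + locSlope f (Icc a b) x * locSlope f (Icc a b) x with hF
  -- maximum of f
  obtain ⟨xM, hxM, hxMmax⟩ := isCompact_Icc.exists_isMaxOn (nonempty_Icc.mpr hab.le) hfc
  set M := f xM with hMdef
  have hMb : ∀ x ∈ Icc a b, f x ≤ M := fun x hx => hxMmax hx
  have hM0 : 0 ≤ M := (hfpos xM hxM).le
  set c₀ := max (-K) 0 with hc₀def
  have hc₀0 : (0:ℝ) ≤ c₀ := le_max_right _ _
  set C := 2 * c₀ * M with hCdef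
  have hC0 : 0 ≤ C := by positivity
  -- the small scale
  set δ₀ := if 0 < K then min (b - a) (Real.pi / (2 * Real.sqrt K)) else b - a with hδ₀def
  have hδ₀pos : 0 < δ₀ := by
    rw [hδ₀def]; split_ifs with h
    · exact lt_min (by linarith) (by positivity)
    · linarith
  have hδ₀K : ∀ θ : ℝ, 0 < θ → θ ≤ δ₀ → (0 < K → Real.sqrt K * θ < Real.pi) := by
    intro θ h1 h2 hK
    rw [hδ₀def, if_pos hK] at h2
    have hsq : 0 < Real.sqrt K := Real.sqrt_pos.mpr hK
    have h3 : θ ≤ Real.pi / (2 * Real.sqrt K) := le_trans h2 (min_le_right _ _)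
    calc Real.sqrt K * θ ≤ Real.sqrt K * (Real.pi / (2 * Real.sqrt K)) :=
          mul_le_mul_of_nonneg_left h3 hsq.le
      _ = Real.pi / 2 := by field_simp
      _ < Real.pi := by linarith [Real.pi_pos]
  have hδ₀FK : ∀ θ : ℝ, 0 < θ → θ ≤ δ₀ → (0 < K → θ < Real.pi / Real.sqrt K) := by
    intro θ h1 h2 hK
    have hsq : 0 < Real.sqrt K := Real.sqrt_pos.mpr hK
    rw [lt_div_iff₀ hsq]
    have := hδ₀K θ h1 h2 hK
    linarith [this, mul_comm θ (Real.sqrt K)]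
  -- semiconcavity on the open interval
  have hSCo : ∀ s ∈ Ioo a b, ∀ t ∈ Ioo a b, s < t → t - s ≤ δ₀ → ∀ l ∈ Icc (0:ℝ) 1,
      (1-l) * f s + l * f t - C * l * (1-l) * (t-s)^2 ≤ f ((1-l)*s + l*t) := by
    intro s hs t ht hst hts l hl
    have hθ : 0 < t - s := by linarith
    have hfk := hFK s hs t ht hst (fun hK => hδ₀FK _ hθ hts hK) l hl
    have hσl := sigma_lower K (t-s) hθ (hδ₀K _ hθ hts) l hl
    have hσl' := sigma_lower K (t-s) hθ (hδ₀K _ hθ hts) (1-l)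
      ⟨by linarith [hl.2], by linarith [hl.1]⟩
    rw [← hc₀def] at hσl hσl'
    rw [hCdef]
    have hfs := hfpos s (Ioo_subset_Icc_self hs)
    have hft := hfpos t (Ioo_subset_Icc_self ht)
    have hMs := hMb s (Ioo_subset_Icc_self hs)
    have hMt := hMb t (Ioo_subset_Icc_self ht)
    have e1 : ((1-l) - (1-l)*(1-(1-l))*c₀*(t-s)^2) * f s ≤ sigmaK K (1-l) (t-s) * f s :=
      mul_le_mul_of_nonneg_right hσl' hfs.le
    have e2 : (l - l*(1-l)*c₀*(t-s)^2) * f t ≤ sigmaK K l (t-s) * f t :=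
      mul_le_mul_of_nonneg_right hσl hft.le
    have hint1 : 0 ≤ l*(1-l)*c₀*(t-s)^2*(M - f s) :=
      mul_nonneg (mul_nonneg (mul_nonneg (mul_nonneg hl.1 (by linarith [hl.2])) hc₀0)
        (sq_nonneg _)) (by linarith)
    have hint2 : 0 ≤ l*(1-l)*c₀*(t-s)^2*(M - f t) :=
      mul_nonneg (mul_nonneg (mul_nonneg (mul_nonneg hl.1 (by linarith [hl.2])) hc₀0)
        (sq_nonneg _)) (by linarith)
    nlinarith [hfk, e1, e2, hint1, hint2]
  -- semiconcavity on the closed interval, by approximation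
  have hSC : ∀ s ∈ Icc a b, ∀ t ∈ Icc a b, s < t → t - s ≤ δ₀ → ∀ l ∈ Icc (0:ℝ) 1,
      (1-l) * f s + l * f t - C * l * (1-l) * (t-s)^2 ≤ f ((1-l)*s + l*t) := by
    intro s hs t ht hst hts l hl
    set d := (t - s)/2 with hd
    have hd0 : 0 < d := by rw [hd]; linarith
    haveI hne : (𝓝[Ioo (0:ℝ) d] 0).NeBot := by
      apply mem_closure_iff_nhdsWithin_neBot.mp
      rw [closure_Ioo hd0.ne]
      exact ⟨le_rfl, hd0.le⟩
    have hsε : ∀ ε ∈ Ioo (0:ℝ) d, s + ε ∈ Ioo a b := by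
      intro ε hε
      constructor
      · linarith [hs.1, hε.1]
      · have : s + ε < s + d := by linarith [hε.2]
        have : s + d < t := by rw [hd]; linarith
        linarith [ht.2, hε.2]
    have htε : ∀ ε ∈ Ioo (0:ℝ) d, t - ε ∈ Ioo a b := by
      intro ε hε
      constructor
      · have : s + d ≤ t - ε → True := fun _ => trivial
        have h1 : ε < d := hε.2
        rw [hd] at h1
        linarith [hs.1, hε.1]
      · linarith [ht.2, hε.1]
    have hstε : ∀ ε ∈ Ioo (0:ℝ) d, s + ε < t - ε := by
      intro ε hε
      have h1 : ε < d := hε.2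
      rw [hd] at h1
      linarith
    have hpt : ∀ ε ∈ Ioo (0:ℝ) d,
        (1-l)*f (s+ε) + l*f (t-ε) - C*l*(1-l)*((t-ε)-(s+ε))^2 ≤ f ((1-l)*(s+ε) + l*(t-ε)) := by
      intro ε hε
      exact hSCo (s+ε) (hsε ε hε) (t-ε) (htε ε hε) (hstε ε hε)
        (by linarith [hε.1]) l hl
    -- limits
    have hmem1 : ∀ᶠ ε in 𝓝[Ioo (0:ℝ) d] 0, s + ε ∈ Icc a b := by
      filter_upwards [self_mem_nhdsWithin] with ε hε
      exact Ioo_subset_Icc_self (hsε ε hε)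
    have hmem2 : ∀ᶠ ε in 𝓝[Ioo (0:ℝ) d] 0, t - ε ∈ Icc a b := by
      filter_upwards [self_mem_nhdsWithin] with ε hε
      exact Ioo_subset_Icc_self (htε ε hε)
    have hmem3 : ∀ᶠ ε in 𝓝[Ioo (0:ℝ) d] 0, (1-l)*(s+ε) + l*(t-ε) ∈ Icc a b := by
      filter_upwards [self_mem_nhdsWithin] with ε hε
      have h1 := hsε ε hε
      have h2 := htε ε hε
      have h3 := hstε ε hε
      constructor
      · nlinarith [hl.1, hl.2, h1.1, h2.1]
      · nlinarith [hl.1, hl.2, h1.2, h2.2]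
    have ht1 : Tendsto (fun ε : ℝ => f (s + ε)) (𝓝[Ioo (0:ℝ) d] 0) (𝓝 (f s)) := by
      apply (hfc s hs).tendsto.comp
      apply tendsto_nhdsWithin_of_tendsto_nhds_of_eventually_within _ _ hmem1
      have : Tendsto (fun ε : ℝ => s + ε) (𝓝 0) (𝓝 (s + 0)) :=
        (continuous_const.add continuous_id).tendsto 0
      simpa using this.mono_left nhdsWithin_le_nhds
    have ht2 : Tendsto (fun ε : ℝ => f (t - ε)) (𝓝[Ioo (0:ℝ) d] 0) (𝓝 (f t)) := by
      apply (hfc t ht).tendsto.comp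
      apply tendsto_nhdsWithin_of_tendsto_nhds_of_eventually_within _ _ hmem2
      have : Tendsto (fun ε : ℝ => t - ε) (𝓝 0) (𝓝 (t - 0)) :=
        (continuous_const.sub continuous_id).tendsto 0
      simpa using this.mono_left nhdsWithin_le_nhds
    have ht3 : Tendsto (fun ε : ℝ => f ((1-l)*(s+ε) + l*(t-ε))) (𝓝[Ioo (0:ℝ) d] 0)
        (𝓝 (f ((1-l)*s + l*t))) := by
      have hmemIcc : (1-l)*s + l*t ∈ Icc a b := by
        constructor
        · nlinarith [hl.1, hl.2, hs.1, ht.1]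
        · nlinarith [hl.1, hl.2, hs.2, ht.2]
      apply (hfc _ hmemIcc).tendsto.comp
      apply tendsto_nhdsWithin_of_tendsto_nhds_of_eventually_within _ _ hmem3
      have : Tendsto (fun ε : ℝ => (1-l)*(s+ε) + l*(t-ε)) (𝓝 0)
          (𝓝 ((1-l)*(s+0) + l*(t-0))) := by
        exact ((continuous_const.mul (continuous_const.add continuous_id)).add
          (continuous_const.mul (continuous_const.sub continuous_id))).tendsto 0
      simpa using this.mono_left nhdsWithin_le_nhds
    have ht4 : Tendsto (fun ε : ℝ => (t-ε)-(s+ε)) (𝓝[Ioo (0:ℝ) d] 0) (𝓝 (t - s)) := by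
      have : Tendsto (fun ε : ℝ => (t-ε)-(s+ε)) (𝓝 0) (𝓝 ((t-0)-(s+0))) :=
        ((continuous_const.sub continuous_id).sub
          (continuous_const.add continuous_id)).tendsto 0
      simpa using this.mono_left nhdsWithin_le_nhds
    have hLHS : Tendsto (fun ε : ℝ => (1-l)*f (s+ε) + l*f (t-ε) - C*l*(1-l)*((t-ε)-(s+ε))^2)
        (𝓝[Ioo (0:ℝ) d] 0) (𝓝 ((1-l)*f s + l*f t - C*l*(1-l)*(t-s)^2)) := by
      exact ((tendsto_const_nhds.mul ht1).add (tendsto_const_nhds.mul ht2)).sub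
        (tendsto_const_nhds.mul (ht4.pow 2))
    exact le_of_tendsto_of_tendsto hLHS ht3
      (by filter_upwards [self_mem_nhdsWithin] with ε hε using hpt ε hε)
  -- the within-filters are nontrivial
  have hneS : ∀ x ∈ Icc a b, (𝓝[Icc a b \ {x}] x).NeBot := by
    intro x hx
    rcases lt_or_eq_of_le hx.2 with hxb | hxb
    · have h1 : (𝓝[Ioo x b] x).NeBot := by
        apply mem_closure_iff_nhdsWithin_neBot.mp
        rw [closure_Ioo hxb.ne]
        exact ⟨le_rfl, hxb.le⟩
      exact Filter.neBot_of_le (f := 𝓝[Ioo x b] x)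
        (nhdsWithin_mono x (fun y hy => ⟨⟨le_trans hx.1 hy.1.le, hy.2.le⟩,
          fun h => ne_of_gt hy.1 (mem_singleton_iff.mp h)⟩))
    · have h1 : (𝓝[Ioo a b] x).NeBot := by
        apply mem_closure_iff_nhdsWithin_neBot.mp
        rw [closure_Ioo hab.ne]
        exact ⟨hx.1, hx.2⟩
      exact Filter.neBot_of_le (f := 𝓝[Ioo a b] x)
        (nhdsWithin_mono x (fun y hy => ⟨⟨hy.1.le, hy.2.le⟩, by
          simp only [mem_singleton_iff]
          intro h
          rw [h, ← hxb] at hy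
          exact lt_irrefl _ hy.2⟩))
  -- the slope is nonnegative
  have hsl0 : ∀ x ∈ Icc a b, (0:EReal) ≤ locSlope f (Icc a b) x := by
    intro x hx
    haveI := hneS x hx
    apply Filter.le_limsup_of_frequently_le'
    apply Filter.Eventually.frequently
    apply Filter.Eventually.of_forall
    intro y
    exact EReal.coe_nonneg.mpr (div_nonneg (le_max_right _ _) (abs_nonneg _))
  -- lower bound for the slope in terms of corrected chords
  have hlow : ∀ x ∈ Icc a b, ∀ z ∈ Icc a b, z ≠ x → |z - x| ≤ δ₀ →
      ∀ r : ℝ, 0 ≤ r → r + C * |z - x| ≤ (f z - f x)/|z - x| →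
      (r : EReal) ≤ locSlope f (Icc a b) x := by
    intro x hx z hz hzx hzd r hr hrc
    rcases hzx.lt_or_gt with hlt | hlt
    · -- z < x : approach x from the left inside (z, x)
      have hsub : Ioo z x ⊆ Icc a b \ {x} := by
        intro y hy
        exact ⟨⟨le_trans hz.1 hy.1.le, le_trans hy.2.le hx.2⟩,
          fun h => ne_of_lt hy.2 (mem_singleton_iff.mp h)⟩
      haveI hnb : (𝓝[Ioo z x] x).NeBot := by
        apply mem_closure_iff_nhdsWithin_neBot.mp
        rw [closure_Ioo hlt.ne]
        exact ⟨hlt.le, le_rfl⟩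
      apply Filter.le_limsup_of_frequently_le'
      apply Filter.Frequently.filter_mono _ (nhdsWithin_mono x hsub)
      apply Filter.Eventually.frequently
      filter_upwards [self_mem_nhdsWithin] with y hy
      have hxz0 : 0 < x - z := sub_pos.mpr hlt
      have habs : |z - x| = x - z := by rw [abs_sub_comm, abs_of_pos hxz0]
      set l := (y - z)/(x - z) with hldef
      have hl0 : 0 < l := div_pos (sub_pos.mpr hy.1) hxz0
      have hl1 : l < 1 := (div_lt_one hxz0).mpr (by linarith [hy.2])
      have hxy : x - y = (1-l) * (x - z) := by
        rw [hldef]; field_simp; ring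
      have hyeq : (1-l)*z + l*x = y := by
        rw [hldef]; field_simp; ring
      have hsc := hSC z hz x hx hlt (by rwa [habs] at hzd) l ⟨hl0.le, hl1.le⟩
      rw [hyeq] at hsc
      have h1 : (r + C*(x-z))*(x-z) ≤ f z - f x := by
        rw [habs] at hrc
        exact (le_div_iff₀ hxz0).mp hrc
      have hkey : r * (x - y) ≤ f y - f x := by
        rw [hxy]
        nlinarith [mul_le_mul_of_nonneg_left h1 (by linarith : (0:ℝ) ≤ 1 - l), hsc,
          mul_nonneg (mul_nonneg hC0 (mul_nonneg (by linarith : (0:ℝ) ≤ 1-l)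
            (by linarith : (0:ℝ) ≤ 1-l))) (sq_nonneg (x-z))]
      have hxy0 : 0 < x - y := sub_pos.mpr hy.2
      have habsy : |y - x| = x - y := by rw [abs_sub_comm, abs_of_pos hxy0]
      show (r : EReal) ≤ ((max (f y - f x) 0 / |y - x| : ℝ) : EReal)
      rw [EReal.coe_le_coe_iff, habsy, le_div_iff₀ hxy0]
      exact le_trans hkey (le_max_left _ _)
    · -- x < z : approach x from the right inside (x, z)
      have hsub : Ioo x z ⊆ Icc a b \ {x} := by
        intro y hy
        exact ⟨⟨le_trans hx.1 hy.1.le, le_trans hy.2.le hz.2⟩,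
          fun h => ne_of_gt hy.1 (mem_singleton_iff.mp h)⟩
      haveI hnb : (𝓝[Ioo x z] x).NeBot := by
        apply mem_closure_iff_nhdsWithin_neBot.mp
        rw [closure_Ioo hlt.ne]
        exact ⟨le_rfl, hlt.le⟩
      apply Filter.le_limsup_of_frequently_le'
      apply Filter.Frequently.filter_mono _ (nhdsWithin_mono x hsub)
      apply Filter.Eventually.frequently
      filter_upwards [self_mem_nhdsWithin] with y hy
      have hzx0 : 0 < z - x := sub_pos.mpr hlt
      have habs : |z - x| = z - x := abs_of_pos hzx0
      set l := (y - x)/(z - x) with hldef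
      have hl0 : 0 < l := div_pos (sub_pos.mpr hy.1) hzx0
      have hl1 : l < 1 := (div_lt_one hzx0).mpr (by linarith [hy.2])
      have hxy : y - x = l * (z - x) := by
        rw [hldef]; field_simp
      have hyeq : (1-l)*x + l*z = y := by
        rw [hldef]; field_simp; ring
      have hsc := hSC x hx z hz hlt (by rwa [habs] at hzd) l ⟨hl0.le, hl1.le⟩
      rw [hyeq] at hsc
      have h1 : (r + C*(z-x))*(z-x) ≤ f z - f x := by
        rw [habs] at hrc
        exact (le_div_iff₀ hzx0).mp hrc
      have hkey : r * (y - x) ≤ f y - f x := by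
        rw [hxy]
        nlinarith [mul_le_mul_of_nonneg_left h1 hl0.le, hsc,
          mul_nonneg (mul_nonneg hC0 (mul_nonneg hl0.le hl0.le)) (sq_nonneg (z-x))]
      have hyx0 : 0 < y - x := sub_pos.mpr hy.1
      have habsy : |y - x| = y - x := abs_of_pos hyx0
      show (r : EReal) ≤ ((max (f y - f x) 0 / |y - x| : ℝ) : EReal)
      rw [EReal.coe_le_coe_iff, habsy, le_div_iff₀ hyx0]
      exact le_trans hkey (le_max_left _ _)
  -- lower semicontinuity
  have hbase : ∀ x₀ ∈ Icc a b, ∀ᶠ x in 𝓝[Icc a b] x₀, ((K*(f x)^2:ℝ):EReal) ≤ F x := by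
    intro x₀ hx₀
    filter_upwards [self_mem_nhdsWithin] with x hx
    rw [hF]
    calc ((K*(f x)^2:ℝ):EReal) = ((K*(f x)^2:ℝ):EReal) + 0 := (add_zero _).symm
      _ ≤ _ := add_le_add_right (er_sq_nonneg _ (hsl0 x hx)) _
  have hlsc : LowerSemicontinuousOn F (Icc a b) := by
    intro x₀ hx₀ c hc
    induction c using EReal.rec with
    | bot =>
      filter_upwards [hbase x₀ hx₀] with x h
      exact lt_of_lt_of_le (EReal.bot_lt_coe _) h
    | top => exact absurd hc (by simp)
    | coe γ =>
      -- choose a suitable real `r` below the slope at `x₀`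
      obtain ⟨r, hr0, hrγ, hrs⟩ : ∃ r : ℝ, 0 ≤ r ∧ γ < K*(f x₀)^2 + r*r ∧
          (r = 0 ∨ (r:EReal) < locSlope f (Icc a b) x₀) := by
        by_cases hstop : locSlope f (Icc a b) x₀ = ⊤
        · refine ⟨1 + Real.sqrt (max 0 (γ + 1 - K*(f x₀)^2)), by positivity, ?_, Or.inr ?_⟩
          · have h1 : (0:ℝ) ≤ max 0 (γ + 1 - K*(f x₀)^2) := le_max_left _ _
            have h2 := Real.sq_sqrt h1
            have h3 := Real.sqrt_nonneg (max 0 (γ + 1 - K*(f x₀)^2))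
            have h4 : γ + 1 - K*(f x₀)^2 ≤ max 0 (γ + 1 - K*(f x₀)^2) := le_max_right _ _
            nlinarith [h2, h3, h4]
          · rw [hstop]; exact EReal.coe_lt_top _
        · have hsbot : locSlope f (Icc a b) x₀ ≠ ⊥ :=
            ne_of_gt (lt_of_lt_of_le (by simp) (hsl0 x₀ hx₀))
          set ρ := (locSlope f (Icc a b) x₀).toReal with hρdef
          have hρ : locSlope f (Icc a b) x₀ = (ρ:EReal) := (EReal.coe_toReal hstop hsbot).symm
          have hρ0 : 0 ≤ ρ := by
            have := hsl0 x₀ hx₀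
            rw [hρ] at this
            exact_mod_cast this
          have hGx₀ : F x₀ = ((K*(f x₀)^2 + ρ*ρ : ℝ):EReal) := by
            rw [hF]
            simp only
            rw [hρ, ← EReal.coe_mul, ← EReal.coe_add]
          have hγ : γ < K*(f x₀)^2 + ρ*ρ := by
            rw [hGx₀] at hc
            exact_mod_cast hc
          rcases eq_or_lt_of_le hρ0 with hρz | hρpos
          · exact ⟨0, le_rfl, by rw [← hρz] at hγ; linarith, Or.inl rfl⟩
          · by_cases hm : γ - K*(f x₀)^2 ≤ 0
            · refine ⟨ρ/2, by positivity, by nlinarith, Or.inr ?_⟩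
              rw [hρ]
              exact_mod_cast (by linarith : ρ/2 < ρ)
            · push_neg at hm
              set m := Real.sqrt (γ - K*(f x₀)^2) with hmdef
              have hm2 : m^2 = γ - K*(f x₀)^2 := Real.sq_sqrt hm.le
              have hm0 : 0 ≤ m := Real.sqrt_nonneg _
              have hmρ : m < ρ := by
                by_contra hcon
                push_neg at hcon
                have := mul_self_le_mul_self hρ0 hcon
                nlinarith
              refine ⟨(m+ρ)/2, by positivity, by nlinarith, Or.inr ?_⟩
              rw [hρ]
              exact_mod_cast (by linarith : (m+ρ)/2 < ρ)
      rcases hr0.eq_or_lt with hrz | hrpos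
      · -- r = 0 : pure continuity
        have hγ' : γ < K*(f x₀)^2 := by rw [← hrz] at hrγ; linarith
        have hcont : ContinuousWithinAt (fun x => K*(f x)^2) (Icc a b) x₀ :=
          continuousWithinAt_const.mul ((hfc x₀ hx₀).pow 2)
        have hev : ∀ᶠ x in 𝓝[Icc a b] x₀, γ < K*(f x)^2 :=
          hcont.eventually (eventually_gt_nhds hγ')
        filter_upwards [hbase x₀ hx₀, hev] with x h1 h2
        exact lt_of_lt_of_le (by exact_mod_cast h2 : (γ:EReal) < ((K*(f x)^2:ℝ):EReal)) h1
      · have hrlt : (r:EReal) < locSlope f (Icc a b) x₀ := by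
          rcases hrs with h | h
          · exact absurd h (by linarith)
          · exact h
        set ε := K*(f x₀)^2 + r*r - γ with hεdef
        have hεpos : 0 < ε := by rw [hεdef]; linarith
        set θ := min (r/2) (ε/(8*r+8)) with hθdef
        have hθpos : 0 < θ := lt_min (by linarith) (by positivity)
        have hθr : θ ≤ r/2 := min_le_left _ _
        have h2rθ : 2*r*θ ≤ ε/4 := by
          have h1 : θ ≤ ε/(8*r+8) := min_le_right _ _
          have h2 : 2*r*θ ≤ 2*r*(ε/(8*r+8)) :=
            mul_le_mul_of_nonneg_left h1 (by linarith)
          have h3 : 2*r*(ε/(8*r+8)) ≤ ε/4 := by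
            rw [show 2*r*(ε/(8*r+8)) = 2*r*ε/(8*r+8) from by ring,
              div_le_div_iff₀ (by positivity) (by norm_num : (0:ℝ) < 4)]
            nlinarith
          linarith
        set δ := min (δ₀/2) (θ/(4*C+4)) with hδdef
        have hδpos : 0 < δ := lt_min (by linarith) (by positivity)
        haveI := hneS x₀ hx₀
        have hfreq : ∃ᶠ y in 𝓝[Icc a b \ {x₀}] x₀,
            (r:EReal) < ((max (f y - f x₀) 0 / |y - x₀| : ℝ) : EReal) :=
          Filter.frequently_lt_of_lt_limsup (by isBoundedDefault) hrlt
        have hballev : ∀ᶠ y in 𝓝[Icc a b \ {x₀}] x₀, |y - x₀| < δ := by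
          have h1 : ∀ᶠ y in 𝓝 x₀, |y - x₀| < δ := by
            filter_upwards [Metric.ball_mem_nhds x₀ hδpos] with y hy
            rwa [Metric.mem_ball, Real.dist_eq] at hy
          exact h1.filter_mono nhdsWithin_le_nhds
        obtain ⟨z, hrz, hzδ, hzmem⟩ :=
          (hfreq.and_eventually (hballev.and self_mem_nhdsWithin)).exists
        have hzI : z ∈ Icc a b := hzmem.1
        have hzx₀ : z ≠ x₀ := fun h => hzmem.2 (by rw [h]; exact rfl)
        have habs0 : 0 < |z - x₀| := abs_pos.mpr (sub_ne_zero.mpr hzx₀)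
        have hrz' : r < max (f z - f x₀) 0 / |z - x₀| := by exact_mod_cast hrz
        have hchord : r < (f z - f x₀)/|z - x₀| := by
          rcases le_or_gt (f z - f x₀) 0 with h | h
          · exfalso
            rw [max_eq_right h] at hrz'
            rw [zero_div] at hrz'
            linarith
          · rwa [max_eq_left h.le] at hrz'
        -- eventual estimates near x₀
        have hE2 : ∀ᶠ x in 𝓝[Icc a b] x₀, |x - x₀| < δ := by
          have h1 : ∀ᶠ x in 𝓝 x₀, |x - x₀| < δ := by
            filter_upwards [Metric.ball_mem_nhds x₀ hδpos] with y hy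
            rwa [Metric.mem_ball, Real.dist_eq] at hy
          exact h1.filter_mono nhdsWithin_le_nhds
        have hE3 : ∀ᶠ x in 𝓝[Icc a b] x₀, x ≠ z :=
          (eventually_ne_nhds hzx₀.symm).filter_mono nhdsWithin_le_nhds
        have hcont2 : Tendsto (fun x => (f z - f x)/|z - x|) (𝓝[Icc a b] x₀)
            (𝓝 ((f z - f x₀)/|z - x₀|)) := by
          apply Tendsto.div
          · exact tendsto_const_nhds.sub (hfc x₀ hx₀)
          · exact ((continuous_abs.comp (continuous_const.sub continuous_id)).continuousWithinAt)
          · exact habs0.ne'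
        have hE4 : ∀ᶠ x in 𝓝[Icc a b] x₀,
            abs ((f z - f x)/|z - x| - (f z - f x₀)/|z - x₀|) < θ/2 := by
          filter_upwards [Metric.tendsto_nhds.mp hcont2 (θ/2) (by linarith)] with x hx
          rwa [Real.dist_eq] at hx
        have hcont5 : Tendsto (fun x => K*(f x)^2) (𝓝[Icc a b] x₀) (𝓝 (K*(f x₀)^2)) :=
          continuousWithinAt_const.mul ((hfc x₀ hx₀).pow 2)
        have hE5 : ∀ᶠ x in 𝓝[Icc a b] x₀, |K*(f x)^2 - K*(f x₀)^2| < ε/2 := by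
          filter_upwards [Metric.tendsto_nhds.mp hcont5 (ε/2) (by linarith)] with x hx
          rwa [Real.dist_eq] at hx
        filter_upwards [self_mem_nhdsWithin, hE2, hE3, hE4, hE5] with x hxI hxδ hxz h4 h5
        have hzxne : z ≠ x := fun h => hxz h.symm
        have habsx : 0 < |z - x| := abs_pos.mpr (sub_ne_zero.mpr hzxne)
        have htri : |z - x| ≤ |z - x₀| + |x - x₀| := by
          calc |z - x| ≤ |z - x₀| + |x₀ - x| := abs_sub_le z x₀ x
            _ = |z - x₀| + |x - x₀| := by rw [abs_sub_comm x₀ x]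
        have hzxd : |z - x| ≤ δ₀ := by
          have hδδ₀ : δ ≤ δ₀/2 := min_le_left _ _
          linarith
        have hCsmall : C*|z - x| ≤ θ/2 := by
          have h2δ : |z - x| ≤ 2*δ := by linarith
          have hδθ : δ ≤ θ/(4*C+4) := min_le_right _ _
          have h6 : C*|z - x| ≤ C*(2*δ) := mul_le_mul_of_nonneg_left h2δ hC0
          have h7 : C*(2*δ) ≤ C*(2*(θ/(4*C+4))) :=
            mul_le_mul_of_nonneg_left (by linarith) hC0
          have h8 : C*(2*(θ/(4*C+4))) ≤ θ/2 := by
            rw [show C*(2*(θ/(4*C+4))) = 2*C*θ/(4*C+4) from by ring,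
              div_le_div_iff₀ (by positivity) (by norm_num : (0:ℝ) < 2)]
            nlinarith
          linarith
        have hchordx : (r - θ) + C*|z - x| ≤ (f z - f x)/|z - x| := by
          have h9 := (abs_lt.mp h4).1
          linarith
        have hrθ0 : 0 ≤ r - θ := by linarith
        have hslx : ((r - θ : ℝ) : EReal) ≤ locSlope f (Icc a b) x :=
          hlow x hxI z hzI hzxne hzxd (r - θ) hrθ0 hchordx
        have hreal : γ < K*(f x)^2 + (r-θ)*(r-θ) := by
          have h10 := (abs_lt.mp h5).1
          nlinarith [sq_nonneg θ]
        calc (γ:EReal) < ((K*(f x)^2 + (r-θ)*(r-θ) : ℝ):EReal) := by exact_mod_cast hreal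
          _ = ((K*(f x)^2:ℝ):EReal) + (((r-θ)*(r-θ):ℝ):EReal) := by rw [EReal.coe_add]
          _ ≤ ((K*(f x)^2:ℝ):EReal) + locSlope f (Icc a b) x * locSlope f (Icc a b) x :=
              add_le_add_right (er_sq (r-θ) hrθ0 _ hslx) _
          _ = F x := by rw [hF]
  refine ⟨hlsc, ?_⟩
  -- attainment of the minimum via compactness and closed sublevel sets
  set S : EReal → Set ℝ := fun c => {x ∈ Icc a b | F x ≤ c} with hSdef
  have hSsub : ∀ c, S c ⊆ Icc a b := fun c x hx => hx.1
  have hSclosed : ∀ c, IsClosed (S c) := by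
    intro c
    rw [isClosed_iff_clusterPt]
    intro x hx
    haveI hxne : (𝓝[S c] x).NeBot := hx
    have hxI : x ∈ Icc a b := by
      have h1 : x ∈ closure (S c) := mem_closure_iff_clusterPt.mpr hx
      have h2 : closure (S c) ⊆ closure (Icc a b) := closure_mono (hSsub c)
      rw [isClosed_Icc.closure_eq] at h2
      exact h2 h1
    refine ⟨hxI, ?_⟩
    by_contra h
    push_neg at h
    have hev := hlsc x hxI c h
    have hev' : ∀ᶠ y in 𝓝[S c] x, c < F y :=
      hev.filter_mono (nhdsWithin_mono x (hSsub c))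
    have hmem : ∀ᶠ y in 𝓝[S c] x, F y ≤ c := by
      filter_upwards [self_mem_nhdsWithin] with y hy
      exact hy.2
    obtain ⟨y, h1, h2⟩ := (hev'.and hmem).exists
    exact absurd h1 (not_lt.mpr h2)
  have hScompact : ∀ c, IsCompact (S c) :=
    fun c => isCompact_Icc.of_isClosed_subset (hSclosed c) (hSsub c)
  set m := sInf (F '' Icc a b) with hmdef
  by_cases hmtop : m = ⊤
  · refine ⟨a, left_mem_Icc.mpr hab.le, fun x hx => ?_⟩
    have h1 : F x = ⊤ := sInf_eq_top.mp hmtop _ (mem_image_of_mem F hx)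
    have h2 : F a = ⊤ := sInf_eq_top.mp hmtop _
      (mem_image_of_mem F (left_mem_Icc.mpr hab.le))
    show F a ≤ F x
    rw [h1, h2]
  · haveI : Nonempty {c : EReal // m < c} := ⟨⟨⊤, lt_top_iff_ne_top.mpr hmtop⟩⟩
    obtain ⟨z, hz⟩ := IsCompact.nonempty_iInter_of_directed_nonempty_isCompact_isClosed
      (fun c : {c : EReal // m < c} => S c.1)
      (fun c d => ⟨⟨min c.1 d.1, lt_min c.2 d.2⟩,
        fun x hx => ⟨hx.1, hx.2.trans (min_le_left _ _)⟩,
        fun x hx => ⟨hx.1, hx.2.trans (min_le_right _ _)⟩⟩)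
      (fun c => by
        obtain ⟨v, hv, hvc⟩ := sInf_lt_iff.mp c.2
        obtain ⟨x, hxI, rfl⟩ := hv
        exact ⟨x, hxI, hvc.le⟩)
      (fun c => hScompact c.1) (fun c => hSclosed c.1)
    have hzI : z ∈ Icc a b :=
      (mem_iInter.mp hz ⟨⊤, lt_top_iff_ne_top.mpr hmtop⟩).1
    refine ⟨z, hzI, fun x hx => ?_⟩
    have hzm : F z ≤ m := by
      apply le_of_forall_gt_imp_ge_of_dense
      intro c hc
      exact (mem_iInter.mp hz ⟨c, hc⟩).2
    show F z ≤ F x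
    exact hzm.trans (sInf_le (mem_image_of_mem F hx))
end
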